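/- arXiv:1605.07968 — 5 statements merged into one kernel-verified Lean document; each statement's English description precedes it below -/
import Mathlib

section
/- For every real q with 0 < q < 1 and every complex x with Re x > 0, the q-gamma function satisfies Γ_q(x) = exp( Σ_{p=1}^∞ (1/p) [ (q^{xp} − q^p)/(1 − q^p) + (x − 1) q^p ] ), where the series on the right converges absolutely. -/
open Complex

/-- The infinite q-Pochhammer symbol `(a; q) = ∏_{n=0}^∞ (1 - a qⁿ)`. -/
noncomputable def qPoch (a : ℂ) (q : ℝ) : ℂ := ∏' n : ℕ, (1 - a * (q : ℂ) ^ n)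

/-- `q^x = exp(x log q)` for the positive real `q`. -/
noncomputable def qpow (q : ℝ) (x : ℂ) : ℂ := Complex.exp (x * (Real.log q : ℂ))

/-- The q-gamma function `Γ_q(x) = (1-q)^{1-x} (q;q)/(q^x;q)`. -/
noncomputable def qGamma (q : ℝ) (x : ℂ) : ℂ :=
  Complex.exp ((1 - x) * (Real.log (1 - q) : ℂ)) * qPoch (q : ℂ) q / qPoch (qpow q x) q

section Aux

variable {q : ℝ}

lemma hasSum_neg_log_shift {z : ℂ} (hz : ‖z‖ < 1) :
    HasSum (fun p : ℕ => z ^ (p+1) / ((p:ℂ)+1)) (-Complex.log (1 - z)) := by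
  have h := Complex.hasSum_taylorSeries_neg_log hz
  have h2 := (hasSum_nat_add_iff' (f := fun n : ℕ => z ^ n / (n : ℂ)) 1).mpr h
  simpa using h2

lemma norm_one_sub_q_pow (hq0 : 0 < q) (hq1 : q < 1) (n : ℕ) :
    1 - q ≤ ‖(1 : ℂ) - (q:ℂ)^(n+1)‖ := by
  have h : ((1 - q^(n+1) : ℝ) : ℂ) = 1 - (q:ℂ)^(n+1) := by push_cast; ring
  rw [← h, Complex.norm_real, Real.norm_of_nonneg]
  · have : q ^ (n+1) ≤ q := by
      calc q ^ (n+1) ≤ q ^ 1 := pow_le_pow_of_le_one hq0.le hq1.le (by omega)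
      _ = q := pow_one q
    linarith
  · have : q ^ (n+1) ≤ 1 := pow_le_one₀ hq0.le hq1.le
    linarith

lemma one_sub_q_pow_ne (hq0 : 0 < q) (hq1 : q < 1) (n : ℕ) :
    (1 : ℂ) - (q:ℂ)^(n+1) ≠ 0 := by
  intro h
  have h2 := norm_one_sub_q_pow hq0 hq1 n
  rw [h, norm_zero] at h2
  linarith

lemma summable_F_norm (hq0 : 0 < q) (hq1 : q < 1) {a : ℂ} (ha : ‖a‖ < 1) :
    Summable (fun np : ℕ × ℕ => ‖(a * (q:ℂ)^np.1)^(np.2+1) / ((np.2:ℂ)+1)‖) := by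
  have hgeo : Summable (fun np : ℕ × ℕ => q ^ np.1 * ‖a‖ ^ np.2) :=
    (summable_geometric_of_lt_one hq0.le hq1).mul_of_nonneg
      (summable_geometric_of_lt_one (norm_nonneg a) ha)
      (fun n => pow_nonneg hq0.le n) (fun p => pow_nonneg (norm_nonneg a) p)
  refine hgeo.of_nonneg_of_le (fun _ => norm_nonneg _) ?_
  rintro ⟨n, p⟩
  have hqn : (0:ℝ) ≤ q ^ n := pow_nonneg hq0.le n
  have hqn1 : q ^ n ≤ 1 := pow_le_one₀ hq0.le hq1.le
  have hnorm : ‖a * (q:ℂ)^n‖ = ‖a‖ * q ^ n := by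
    rw [norm_mul, norm_pow, Complex.norm_real, Real.norm_of_nonneg hq0.le]
  have h1 : (1:ℝ) ≤ ‖((p:ℂ)+1)‖ := by
    have h : ((p:ℂ)+1) = ((p+1 : ℕ) : ℂ) := by push_cast; ring
    rw [h, Complex.norm_natCast]
    exact_mod_cast Nat.one_le_iff_ne_zero.mpr (Nat.succ_ne_zero p)
  calc ‖(a * (q:ℂ)^n)^(p+1) / ((p:ℂ)+1)‖ ≤ ‖(a * (q:ℂ)^n)^(p+1)‖ := by
        rw [norm_div]; exact div_le_self (norm_nonneg _) h1
    _ = (‖a‖ * q^n)^(p+1) := by rw [norm_pow, hnorm]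
    _ = (‖a‖ * q^n)^p * (‖a‖ * q^n) := pow_succ _ _
    _ ≤ ‖a‖^p * q^n := by
        apply mul_le_mul
        · exact pow_le_pow_left₀ (by positivity) (mul_le_of_le_one_right (norm_nonneg a) hqn1) p
        · exact mul_le_of_le_one_left hqn ha.le
        · positivity
        · positivity
    _ = q^n * ‖a‖^p := by ring

lemma qPoch_eq_exp (hq0 : 0 < q) (hq1 : q < 1) {a : ℂ} (ha : ‖a‖ < 1) :
    qPoch a q =
      Complex.exp (-(∑' p : ℕ, a^(p+1) / ((((p:ℂ)+1)) * (1 - (q:ℂ)^(p+1))))) := by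
  have hznorm : ∀ n : ℕ, ‖a * (q:ℂ)^n‖ = ‖a‖ * q ^ n := fun n => by
    rw [norm_mul, norm_pow, Complex.norm_real, Real.norm_of_nonneg hq0.le]
  have hz : ∀ n : ℕ, ‖a * (q:ℂ)^n‖ < 1 := fun n => by
    rw [hznorm]
    calc ‖a‖ * q ^ n ≤ ‖a‖ * 1 :=
          mul_le_mul_of_nonneg_left (pow_le_one₀ hq0.le hq1.le) (norm_nonneg a)
      _ = ‖a‖ := mul_one _
      _ < 1 := ha
  have hne : ∀ n : ℕ, (1:ℂ) - a * (q:ℂ)^n ≠ 0 := fun n => by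
    intro h
    have h1 : a * (q:ℂ)^n = 1 := by linear_combination -h
    have h2 : ‖a * (q:ℂ)^n‖ = 1 := by rw [h1, norm_one]
    linarith [hz n]
  have hFnorm : Summable (fun np : ℕ × ℕ =>
      ‖(a * (q:ℂ)^np.1)^(np.2+1) / ((np.2:ℂ)+1)‖) := summable_F_norm hq0 hq1 ha
  have hF : Summable (fun np : ℕ × ℕ => (a * (q:ℂ)^np.1)^(np.2+1) / ((np.2:ℂ)+1)) :=
    hFnorm.of_norm
  have hfiber : ∀ n : ℕ, HasSum (fun p : ℕ => (a * (q:ℂ)^n)^(p+1) / ((p:ℂ)+1))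
      (-Complex.log (1 - a * (q:ℂ)^n)) := fun n => hasSum_neg_log_shift (hz n)
  have hnorm_fiber : Summable (fun n : ℕ => ∑' p : ℕ,
      ‖(a * (q:ℂ)^n)^(p+1) / ((p:ℂ)+1)‖) :=
    ((summable_prod_of_nonneg (fun _ => norm_nonneg _)).mp hFnorm).2
  have hlogsum : Summable (fun n : ℕ => Complex.log (1 - a * (q:ℂ)^n)) := by
    apply Summable.of_norm_bounded hnorm_fiber
    intro n
    have h : Complex.log (1 - a * (q:ℂ)^n)
        = -∑' p : ℕ, (a * (q:ℂ)^n)^(p+1) / ((p:ℂ)+1) := by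
      rw [(hfiber n).tsum_eq]; ring
    rw [h, norm_neg]
    exact norm_tsum_le_tsum_norm (hfiber n).summable.norm
  have hprod : qPoch a q = Complex.exp (∑' n : ℕ, Complex.log (1 - a * (q:ℂ)^n)) := by
    have h := Complex.cexp_tsum_eq_tprod (f := fun n => 1 - a * (q:ℂ)^n)
      hne hlogsum
    have h2 := h
    simpa [qPoch, Function.comp] using h2.symm
  rw [hprod]
  congr 1
  have hstep1 : ∑' n : ℕ, Complex.log (1 - a * (q:ℂ)^n)
      = -∑' (n : ℕ) (p : ℕ), (a * (q:ℂ)^n)^(p+1) / ((p:ℂ)+1) := by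
    rw [← tsum_neg]
    congr 1
    ext n
    rw [(hfiber n).tsum_eq]
    ring
  have hswap : ∑' (n : ℕ) (p : ℕ), (a * (q:ℂ)^n)^(p+1) / ((p:ℂ)+1)
      = ∑' (p : ℕ) (n : ℕ), (a * (q:ℂ)^n)^(p+1) / ((p:ℂ)+1) := by
    refine (Summable.tsum_comm' (f := fun (n p : ℕ) => (a * (q:ℂ)^n)^(p+1) / ((p:ℂ)+1))
      ?_ ?_ ?_).symm
    · exact hF
    · exact fun n => (hfiber n).summable
    · exact fun p => hF.prod_symm.prod_factor p
  have hinner : ∀ p : ℕ, (∑' n : ℕ, (a * (q:ℂ)^n)^(p+1) / ((p:ℂ)+1))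
      = a^(p+1) / (((p:ℂ)+1) * (1 - (q:ℂ)^(p+1))) := by
    intro p
    have hqp : ‖(q:ℂ)^(p+1)‖ < 1 := by
      rw [norm_pow, Complex.norm_real, Real.norm_of_nonneg hq0.le]
      exact pow_lt_one₀ hq0.le hq1 (Nat.succ_ne_zero p)
    have hterm : ∀ n : ℕ, (a * (q:ℂ)^n)^(p+1) / ((p:ℂ)+1)
        = (a^(p+1) / ((p:ℂ)+1)) * ((q:ℂ)^(p+1))^n := by
      intro n
      rw [mul_pow, ← pow_mul, ← pow_mul, Nat.mul_comm n (p+1), pow_mul]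
      ring
    rw [tsum_congr hterm, tsum_mul_left, tsum_geometric_of_norm_lt_one hqp,
      ← div_eq_mul_inv, div_div]
  rw [hstep1, hswap, tsum_congr hinner]

lemma one_le_norm_p1 (p : ℕ) : (1:ℝ) ≤ ‖((p:ℂ)+1)‖ := by
  have h : ((p:ℂ)+1) = ((p+1 : ℕ) : ℂ) := by push_cast; ring
  rw [h, Complex.norm_natCast]
  exact_mod_cast Nat.succ_le_succ (Nat.zero_le p)

-- norm-summability of the S-series
lemma summable_S_norm (hq0 : 0 < q) (hq1 : q < 1) {a : ℂ} (ha : ‖a‖ < 1) :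
    Summable (fun p : ℕ => ‖a^(p+1) / (((p:ℂ)+1) * (1 - (q:ℂ)^(p+1)))‖) := by
  have hgeo : Summable (fun p : ℕ => (1/(1-q)) * ‖a‖ ^ p) :=
    (summable_geometric_of_lt_one (norm_nonneg a) ha).mul_left _
  refine hgeo.of_nonneg_of_le (fun _ => norm_nonneg _) fun p => ?_
  have hden : 1 - q ≤ ‖((p:ℂ)+1) * (1 - (q:ℂ)^(p+1))‖ := by
    rw [norm_mul]
    have h1 : (1:ℝ) ≤ ‖((p:ℂ)+1)‖ := one_le_norm_p1 p
    calc 1 - q = 1 * (1 - q) := (one_mul _).symm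
      _ ≤ ‖((p:ℂ)+1)‖ * ‖1 - (q:ℂ)^(p+1)‖ :=
        mul_le_mul h1 (norm_one_sub_q_pow hq0 hq1 p) (by linarith) (by linarith)
  rw [norm_div, norm_pow]
  calc ‖a‖^(p+1) / ‖((p:ℂ)+1) * (1 - (q:ℂ)^(p+1))‖
      ≤ ‖a‖^p / (1-q) :=
        div_le_div₀ (by positivity)
          (pow_le_pow_of_le_one (norm_nonneg a) ha.le (by omega)) (by linarith) hden
    _ = (1/(1-q)) * ‖a‖ ^ p := by ring

end Aux

/-- For `0 < q < 1` and `Re x > 0`,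
`Γ_q(x) = exp( Σ_{p≥1} (1/p) [ (q^{xp} − q^p)/(1 − q^p) + (x − 1) q^p ] )`,
the series converging absolutely. -/
theorem qGamma_eq_exp_tsum (q : ℝ) (hq0 : 0 < q) (hq1 : q < 1) (x : ℂ) (hx : 0 < x.re) :
    Summable (fun p : ℕ =>
      ‖(1 / ((p : ℂ) + 1)) *
        ((qpow q (x * ((p : ℂ) + 1)) - (q : ℂ) ^ (p + 1)) / (1 - (q : ℂ) ^ (p + 1)) +
          (x - 1) * (q : ℂ) ^ (p + 1))‖) ∧
    qGamma q x = Complex.exp (∑' p : ℕ,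
      (1 / ((p : ℂ) + 1)) *
        ((qpow q (x * ((p : ℂ) + 1)) - (q : ℂ) ^ (p + 1)) / (1 - (q : ℂ) ^ (p + 1)) +
          (x - 1) * (q : ℂ) ^ (p + 1))) := by
  have hlq : Real.log q < 0 := Real.log_neg hq0 hq1
  -- the base a = q^x
  set a : ℂ := qpow q x with ha_def
  have hanorm : ‖a‖ = q ^ x.re := by
    rw [ha_def, qpow, Complex.norm_exp, Real.rpow_def_of_pos hq0]
    congr 1
    simp [Complex.mul_re, mul_comm]
  have ha : ‖a‖ < 1 := by
    rw [hanorm]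
    exact Real.rpow_lt_one hq0.le hq1 hx
  have hqc : ‖(q:ℂ)‖ < 1 := by
    rw [Complex.norm_real, Real.norm_of_nonneg hq0.le]; exact hq1
  -- a^(p+1) = qpow q (x*(p+1))
  have hapow : ∀ p : ℕ, qpow q (x * ((p:ℂ)+1)) = a ^ (p+1) := by
    intro p
    rw [ha_def, qpow, qpow, ← Complex.exp_nat_mul]
    congr 1
    push_cast
    ring
  -- the three summands
  have hSA : Summable (fun p : ℕ => ‖a^(p+1) / (((p:ℂ)+1) * (1 - (q:ℂ)^(p+1)))‖) :=
    summable_S_norm hq0 hq1 ha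
  have hSQ : Summable (fun p : ℕ => ‖(q:ℂ)^(p+1) / (((p:ℂ)+1) * (1 - (q:ℂ)^(p+1)))‖) :=
    summable_S_norm hq0 hq1 hqc
  have hT : HasSum (fun p : ℕ => (q:ℂ)^(p+1) / ((p:ℂ)+1)) (-Complex.log (1 - (q:ℂ))) :=
    hasSum_neg_log_shift hqc
  have hTnorm : Summable (fun p : ℕ => ‖(q:ℂ)^(p+1) / ((p:ℂ)+1)‖) := by
    have hgeo : Summable (fun p : ℕ => (q:ℝ) ^ p) := summable_geometric_of_lt_one hq0.le hq1
    refine hgeo.of_nonneg_of_le (fun _ => norm_nonneg _) fun p => ?_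
    have h1 : (1:ℝ) ≤ ‖((p:ℂ)+1)‖ := one_le_norm_p1 p
    calc ‖(q:ℂ)^(p+1) / ((p:ℂ)+1)‖ ≤ ‖(q:ℂ)^(p+1)‖ := by
          rw [norm_div]; exact div_le_self (norm_nonneg _) h1
      _ = q^(p+1) := by rw [norm_pow, Complex.norm_real, Real.norm_of_nonneg hq0.le]
      _ ≤ q^p := pow_le_pow_of_le_one hq0.le hq1.le (by omega)
  -- termwise identity
  have hterm : ∀ p : ℕ,
      (1 / ((p : ℂ) + 1)) *
        ((qpow q (x * ((p : ℂ) + 1)) - (q : ℂ) ^ (p + 1)) / (1 - (q : ℂ) ^ (p + 1)) +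
          (x - 1) * (q : ℂ) ^ (p + 1))
      = a^(p+1) / (((p:ℂ)+1) * (1 - (q:ℂ)^(p+1)))
        - (q:ℂ)^(p+1) / (((p:ℂ)+1) * (1 - (q:ℂ)^(p+1)))
        + (x - 1) * ((q:ℂ)^(p+1) / ((p:ℂ)+1)) := by
    intro p
    rw [hapow p]
    have hne1 : ((p:ℂ)+1) ≠ 0 := Nat.cast_add_one_ne_zero p
    have hne2 : (1:ℂ) - (q:ℂ)^(p+1) ≠ 0 := one_sub_q_pow_ne hq0 hq1 p
    field_simp
  -- summability of the norm series
  constructor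
  · have hsum3 : Summable (fun p : ℕ =>
        ‖a^(p+1) / (((p:ℂ)+1) * (1 - (q:ℂ)^(p+1)))‖
        + ‖(q:ℂ)^(p+1) / (((p:ℂ)+1) * (1 - (q:ℂ)^(p+1)))‖
        + ‖x - 1‖ * ‖(q:ℂ)^(p+1) / ((p:ℂ)+1)‖) :=
      (hSA.add hSQ).add (hTnorm.mul_left _)
    refine hsum3.of_nonneg_of_le (fun _ => norm_nonneg _) fun p => ?_
    rw [hterm p]
    calc ‖_ - _ + (x-1) * ((q:ℂ)^(p+1) / ((p:ℂ)+1))‖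
        ≤ ‖_ - _‖ + ‖(x-1) * ((q:ℂ)^(p+1) / ((p:ℂ)+1))‖ := norm_add_le _ _
      _ ≤ _ := by
          rw [norm_mul]
          exact add_le_add_left (norm_sub_le _ _) _
  · -- value computation
    rw [qGamma, qPoch_eq_exp hq0 hq1 hqc, qPoch_eq_exp hq0 hq1 ha,
      ← Complex.exp_add, ← Complex.exp_sub]
    congr 1
    have hlog : (Real.log (1 - q) : ℂ) = Complex.log (1 - (q:ℂ)) := by
      rw [Complex.ofReal_log (by linarith)]
      norm_num
    have hTlog : Complex.log (1 - (q:ℂ)) = -∑' p : ℕ, (q:ℂ)^(p+1) / ((p:ℂ)+1) := by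
      rw [hT.tsum_eq, neg_neg]
    rw [hlog, hTlog]
    rw [tsum_congr hterm]
    rw [Summable.tsum_add ((hSA.of_norm).sub (hSQ.of_norm)) ((hT.summable).mul_left (x-1)),
      Summable.tsum_sub (hSA.of_norm) (hSQ.of_norm), tsum_mul_left]
    ring
end

section
/- For every real q with 0 < q < 1 and every complex x with Re x > 0, the q-Barnes function satisfies G_q(x) = exp( Σ_{p=1}^∞ (1/p) [ (1/2)(1−x)(2−x) q^p + (1−x) q^p/(1 − q^p) − (q^{xp} − q^p)/(1 − q^p)² ] ), where the series on the right converges absolutely. -/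
open Complex

/-- The double q-factorial `(a; q, q) = ∏_{n,m=0}^∞ (1 - a q^{n+m})`. -/
noncomputable def qPoch2 (a : ℂ) (q : ℝ) : ℂ := ∏' p : ℕ × ℕ, (1 - a * (q : ℂ) ^ (p.1 + p.2))

/-- The real number `(q; q) = ∏_{n=0}^∞ (1 - q·qⁿ)`. -/
noncomputable def qPochR (q : ℝ) : ℝ := ∏' n : ℕ, (1 - q * q ^ n)

/-- The q-Barnes function `G_q(x) = (1−q)^{−(1−x)(2−x)/2} (q;q)^{x−1} (q^x;q,q)/(q;q,q)`. -/
noncomputable def qBarnes (q : ℝ) (x : ℂ) : ℂ :=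
  Complex.exp (-((1 - x) * (2 - x) / 2) * (Real.log (1 - q) : ℂ)) *
    Complex.exp ((x - 1) * (Real.log (qPochR q) : ℂ)) *
    qPoch2 (qpow q x) q / qPoch2 (q : ℂ) q

private lemma hasSum_neg_log' {w : ℂ} (hw : ‖w‖ < 1) :
    HasSum (fun p : ℕ => w ^ (p + 1) / ((p : ℂ) + 1)) (-Complex.log (1 - w)) := by
  have h := Complex.hasSum_taylorSeries_neg_log hw
  have h2 := (hasSum_nat_add_iff' (f := fun n : ℕ => w ^ n / n) 1).mpr h
  simp only [Finset.range_one, Finset.sum_singleton, pow_zero, Nat.cast_zero, div_zero,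
    sub_zero] at h2
  refine h2.congr_fun fun p => ?_
  push_cast
  ring_nf

private lemma tsum_pow_add' {s : ℂ} (hs : ‖s‖ < 1) :
    ∑' nm : ℕ × ℕ, s ^ (nm.1 + nm.2) = ((1 - s)⁻¹) ^ 2 := by
  have hgeo : Summable (fun n : ℕ => ‖s ^ n‖) := by
    simpa [norm_pow] using summable_geometric_of_lt_one (norm_nonneg s) hs
  calc ∑' nm : ℕ × ℕ, s ^ (nm.1 + nm.2) = ∑' nm : ℕ × ℕ, s ^ nm.1 * s ^ nm.2 := by
        simp [pow_add]
    _ = (∑' n : ℕ, s ^ n) * (∑' n : ℕ, s ^ n) :=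
        (tsum_mul_tsum_of_summable_norm hgeo hgeo).symm
    _ = ((1 - s)⁻¹) ^ 2 := by rw [tsum_geometric_of_norm_lt_one hs, sq]

set_option maxHeartbeats 2000000 in
private lemma key2 {q : ℝ} (hq0 : 0 < q) (hq1 : q < 1) {c : ℂ} (hc : ‖c‖ < 1) :
    Summable (fun nm : ℕ × ℕ => Complex.log (1 - c * (q : ℂ) ^ (nm.1 + nm.2))) ∧
    HasSum (fun p : ℕ => -(c ^ (p + 1) / ((p : ℂ) + 1)) * ((1 - (q : ℂ) ^ (p + 1))⁻¹) ^ 2)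
      (∑' nm : ℕ × ℕ, Complex.log (1 - c * (q : ℂ) ^ (nm.1 + nm.2))) := by
  have hq0' : (0:ℝ) ≤ q := hq0.le
  have hrn : ∀ k : ℕ, ‖(q:ℂ) ^ k‖ = q ^ k := fun k => by
    rw [norm_pow, Complex.norm_real, Real.norm_eq_abs, abs_of_pos hq0]
  have hw : ∀ nm : ℕ × ℕ, ‖c * (q:ℂ) ^ (nm.1 + nm.2)‖ < 1 := fun nm => by
    rw [norm_mul, hrn]
    exact lt_of_le_of_lt
      (mul_le_of_le_one_right (norm_nonneg c) (pow_le_one₀ hq0' hq1.le)) hc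
  set g : (ℕ × ℕ) × ℕ → ℂ :=
    fun z => -((c * (q:ℂ) ^ (z.1.1 + z.1.2)) ^ (z.2 + 1) / ((z.2 : ℂ) + 1)) with hgdef
  have hmaj : Summable (fun z : (ℕ × ℕ) × ℕ => (q ^ z.1.1 * q ^ z.1.2) * ‖c‖ ^ (z.2 + 1)) := by
    have h1 : Summable (fun n : ℕ => q ^ n) := summable_geometric_of_lt_one hq0' hq1
    have h2 : Summable (fun p : ℕ => ‖c‖ ^ (p + 1)) := by
      simpa [pow_succ'] using (summable_geometric_of_lt_one (norm_nonneg c) hc).mul_left ‖c‖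
    exact (h1.mul_of_nonneg h1 (fun n => pow_nonneg hq0' n) (fun n => pow_nonneg hq0' n)).mul_of_nonneg
      h2 (fun nm => mul_nonneg (pow_nonneg hq0' _) (pow_nonneg hq0' _))
      (fun p => pow_nonneg (norm_nonneg c) _)
  have hgnorm : Summable (fun z => ‖g z‖) := by
    refine hmaj.of_nonneg_of_le (fun z => norm_nonneg _) ?_
    rintro ⟨⟨n, m⟩, p⟩
    have hp1 : (1:ℝ) ≤ (p:ℝ) + 1 := by have := Nat.cast_nonneg (α := ℝ) p; linarith
    have e : ‖g ((n, m), p)‖ = (‖c‖ * q ^ (n + m)) ^ (p + 1) / ((p:ℝ) + 1) := by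
      rw [hgdef]
      rw [norm_neg, norm_div, norm_pow, norm_mul, hrn]
      congr 1
      rw [show ((p:ℂ) + 1) = ((p + 1 : ℕ) : ℂ) by push_cast; ring, Complex.norm_natCast]
      push_cast; ring
    rw [e]
    calc (‖c‖ * q ^ (n + m)) ^ (p + 1) / ((p:ℝ) + 1) ≤ (‖c‖ * q ^ (n + m)) ^ (p + 1) :=
          div_le_self (by positivity) hp1
      _ = ‖c‖ ^ (p + 1) * q ^ ((n + m) * (p + 1)) := by rw [mul_pow, ← pow_mul]
      _ ≤ ‖c‖ ^ (p + 1) * q ^ (n + m) := by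
          refine mul_le_mul_of_nonneg_left ?_ (by positivity)
          exact pow_le_pow_of_le_one hq0' hq1.le (Nat.le_mul_of_pos_right _ (Nat.succ_pos p))
      _ = q ^ n * q ^ m * ‖c‖ ^ (p + 1) := by rw [pow_add]; ring
  have hg : Summable g := hgnorm.of_norm
  have h_each : ∀ nm : ℕ × ℕ, HasSum (fun p => g (nm, p))
      (Complex.log (1 - c * (q:ℂ) ^ (nm.1 + nm.2))) := fun nm => by
    simpa using (hasSum_neg_log' (hw nm)).neg
  have hlog_sum : Summable (fun nm : ℕ × ℕ => Complex.log (1 - c * (q:ℂ) ^ (nm.1 + nm.2))) :=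
    hg.prod.congr fun nm => (h_each nm).tsum_eq
  refine ⟨hlog_sum, ?_⟩
  have e1 : ∑' nm : ℕ × ℕ, Complex.log (1 - c * (q:ℂ) ^ (nm.1 + nm.2)) = ∑' z, g z := by
    rw [hg.tsum_prod]
    exact tsum_congr fun nm => (h_each nm).tsum_eq.symm
  have hg' : Summable (fun w : ℕ × (ℕ × ℕ) => g (w.2, w.1)) := hg.prod_symm
  have e2 : ∑' w : ℕ × (ℕ × ℕ), g (w.2, w.1) = ∑' z, g z :=
    (Equiv.prodComm ℕ (ℕ × ℕ)).tsum_eq g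
  have h5 : HasSum (fun p : ℕ => ∑' nm : ℕ × ℕ, g (nm, p)) (∑' z, g z) := by
    have h6 := hg'.prod.hasSum
    rwa [← hg'.tsum_prod' hg'.prod_factor, e2] at h6
  rw [e1]
  refine h5.congr_fun fun p => ?_
  have hs : ‖(q:ℂ) ^ (p + 1)‖ < 1 := by
    rw [hrn]
    calc q ^ (p + 1) ≤ q ^ 1 :=
          pow_le_pow_of_le_one hq0' hq1.le (Nat.succ_le_succ (Nat.zero_le p))
      _ = q := pow_one q
      _ < 1 := hq1
  calc (-(c ^ (p + 1) / ((p : ℂ) + 1))) * ((1 - (q:ℂ) ^ (p + 1))⁻¹) ^ 2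
      = (-(c ^ (p + 1) / ((p : ℂ) + 1))) * ∑' nm : ℕ × ℕ, ((q:ℂ) ^ (p + 1)) ^ (nm.1 + nm.2) := by
        rw [tsum_pow_add' hs]
    _ = ∑' nm : ℕ × ℕ, (-(c ^ (p + 1) / ((p : ℂ) + 1))) * ((q:ℂ) ^ (p + 1)) ^ (nm.1 + nm.2) :=
        tsum_mul_left.symm
    _ = ∑' nm : ℕ × ℕ, g (nm, p) := by
        refine tsum_congr fun nm => ?_
        rw [hgdef]
        show _ = -((c * (q:ℂ) ^ (nm.1 + nm.2)) ^ (p + 1) / ((p : ℂ) + 1))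
        rw [mul_pow, ← pow_mul, ← pow_mul, Nat.mul_comm]
        ring

set_option maxHeartbeats 2000000 in
private lemma key1 {q : ℝ} (hq0 : 0 < q) (hq1 : q < 1) {c : ℂ} (hc : ‖c‖ < 1) :
    Summable (fun n : ℕ => Complex.log (1 - c * (q : ℂ) ^ n)) ∧
    HasSum (fun p : ℕ => -(c ^ (p + 1) / ((p : ℂ) + 1)) * (1 - (q : ℂ) ^ (p + 1))⁻¹)
      (∑' n : ℕ, Complex.log (1 - c * (q : ℂ) ^ n)) := by
  have hq0' : (0:ℝ) ≤ q := hq0.le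
  have hrn : ∀ k : ℕ, ‖(q:ℂ) ^ k‖ = q ^ k := fun k => by
    rw [norm_pow, Complex.norm_real, Real.norm_eq_abs, abs_of_pos hq0]
  have hw : ∀ n : ℕ, ‖c * (q:ℂ) ^ n‖ < 1 := fun n => by
    rw [norm_mul, hrn]
    exact lt_of_le_of_lt
      (mul_le_of_le_one_right (norm_nonneg c) (pow_le_one₀ hq0' hq1.le)) hc
  set g : ℕ × ℕ → ℂ :=
    fun z => -((c * (q:ℂ) ^ z.1) ^ (z.2 + 1) / ((z.2 : ℂ) + 1)) with hgdef
  have hmaj : Summable (fun z : ℕ × ℕ => q ^ z.1 * ‖c‖ ^ (z.2 + 1)) := by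
    have h1 : Summable (fun n : ℕ => q ^ n) := summable_geometric_of_lt_one hq0' hq1
    have h2 : Summable (fun p : ℕ => ‖c‖ ^ (p + 1)) := by
      simpa [pow_succ'] using (summable_geometric_of_lt_one (norm_nonneg c) hc).mul_left ‖c‖
    exact h1.mul_of_nonneg h2 (fun n => pow_nonneg hq0' n) (fun p => pow_nonneg (norm_nonneg c) _)
  have hgnorm : Summable (fun z => ‖g z‖) := by
    refine hmaj.of_nonneg_of_le (fun z => norm_nonneg _) ?_
    rintro ⟨n, p⟩
    have hp1 : (1:ℝ) ≤ (p:ℝ) + 1 := by have := Nat.cast_nonneg (α := ℝ) p; linarith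
    have e : ‖g (n, p)‖ = (‖c‖ * q ^ n) ^ (p + 1) / ((p:ℝ) + 1) := by
      rw [hgdef]
      rw [norm_neg, norm_div, norm_pow, norm_mul, hrn]
      congr 1
      rw [show ((p:ℂ) + 1) = ((p + 1 : ℕ) : ℂ) by push_cast; ring, Complex.norm_natCast]
      push_cast; ring
    rw [e]
    calc (‖c‖ * q ^ n) ^ (p + 1) / ((p:ℝ) + 1) ≤ (‖c‖ * q ^ n) ^ (p + 1) :=
          div_le_self (by positivity) hp1
      _ = ‖c‖ ^ (p + 1) * q ^ (n * (p + 1)) := by rw [mul_pow, ← pow_mul]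
      _ ≤ ‖c‖ ^ (p + 1) * q ^ n := by
          refine mul_le_mul_of_nonneg_left ?_ (by positivity)
          exact pow_le_pow_of_le_one hq0' hq1.le (Nat.le_mul_of_pos_right _ (Nat.succ_pos p))
      _ = q ^ n * ‖c‖ ^ (p + 1) := by ring
  have hg : Summable g := hgnorm.of_norm
  have h_each : ∀ n : ℕ, HasSum (fun p => g (n, p))
      (Complex.log (1 - c * (q:ℂ) ^ n)) := fun n => by
    simpa using (hasSum_neg_log' (hw n)).neg
  have hlog_sum : Summable (fun n : ℕ => Complex.log (1 - c * (q:ℂ) ^ n)) :=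
    hg.prod.congr fun n => (h_each n).tsum_eq
  refine ⟨hlog_sum, ?_⟩
  have e1 : ∑' n : ℕ, Complex.log (1 - c * (q:ℂ) ^ n) = ∑' z, g z := by
    rw [hg.tsum_prod]
    exact tsum_congr fun n => (h_each n).tsum_eq.symm
  have hg' : Summable (fun w : ℕ × ℕ => g (w.2, w.1)) := hg.prod_symm
  have e2 : ∑' w : ℕ × ℕ, g (w.2, w.1) = ∑' z, g z := (Equiv.prodComm ℕ ℕ).tsum_eq g
  have h5 : HasSum (fun p : ℕ => ∑' n : ℕ, g (n, p)) (∑' z, g z) := by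
    have h6 := hg'.prod.hasSum
    rwa [← hg'.tsum_prod' hg'.prod_factor, e2] at h6
  rw [e1]
  refine h5.congr_fun fun p => ?_
  have hs : ‖(q:ℂ) ^ (p + 1)‖ < 1 := by
    rw [hrn]
    calc q ^ (p + 1) ≤ q ^ 1 :=
          pow_le_pow_of_le_one hq0' hq1.le (Nat.succ_le_succ (Nat.zero_le p))
      _ = q := pow_one q
      _ < 1 := hq1
  calc (-(c ^ (p + 1) / ((p : ℂ) + 1))) * (1 - (q:ℂ) ^ (p + 1))⁻¹
      = (-(c ^ (p + 1) / ((p : ℂ) + 1))) * ∑' n : ℕ, ((q:ℂ) ^ (p + 1)) ^ n := by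
        rw [tsum_geometric_of_norm_lt_one hs]
    _ = ∑' n : ℕ, (-(c ^ (p + 1) / ((p : ℂ) + 1))) * ((q:ℂ) ^ (p + 1)) ^ n :=
        tsum_mul_left.symm
    _ = ∑' n : ℕ, g (n, p) := by
        refine tsum_congr fun n => ?_
        rw [hgdef]
        show _ = -((c * (q:ℂ) ^ n) ^ (p + 1) / ((p : ℂ) + 1))
        rw [mul_pow, ← pow_mul, ← pow_mul, Nat.mul_comm]
        ring

private lemma qPoch2_eq_exp {q : ℝ} (hq0 : 0 < q) (hq1 : q < 1) {c : ℂ} (hc : ‖c‖ < 1) :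
    qPoch2 c q =
      Complex.exp (∑' nm : ℕ × ℕ, Complex.log (1 - c * (q : ℂ) ^ (nm.1 + nm.2))) := by
  have hrn : ∀ k : ℕ, ‖(q:ℂ) ^ k‖ = q ^ k := fun k => by
    rw [norm_pow, Complex.norm_real, Real.norm_eq_abs, abs_of_pos hq0]
  have hw : ∀ nm : ℕ × ℕ, ‖c * (q:ℂ) ^ (nm.1 + nm.2)‖ < 1 := fun nm => by
    rw [norm_mul, hrn]
    exact lt_of_le_of_lt
      (mul_le_of_le_one_right (norm_nonneg c) (pow_le_one₀ hq0.le hq1.le)) hc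
  have hfn : ∀ (_ : Unit) (nm : ℕ × ℕ), (1 - c * (q:ℂ) ^ (nm.1 + nm.2)) ≠ 0 := by
    intro _ nm h0
    rw [sub_eq_zero] at h0
    have h := hw nm
    rw [← h0] at h
    simp at h
  have h := Complex.cexp_tsum_eq_tprod (ι := ℕ × ℕ)
    (f := fun nm => 1 - c * (q:ℂ) ^ (nm.1 + nm.2)) (hfn ()) (key2 hq0 hq1 hc).1
  exact h.symm

private lemma log_qPochR {q : ℝ} (hq0 : 0 < q) (hq1 : q < 1) :
    ((Real.log (qPochR q) : ℝ) : ℂ) = ∑' n : ℕ, Complex.log (1 - (q:ℂ) * (q:ℂ) ^ n) := by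
  have hcq : ‖(q:ℂ)‖ < 1 := by
    rw [Complex.norm_real, Real.norm_eq_abs, abs_of_pos hq0]; exact hq1
  have hpos : ∀ n : ℕ, 0 < 1 - q * q ^ n := by
    intro n
    have h1 : q * q ^ n ≤ q * 1 :=
      mul_le_mul_of_nonneg_left (pow_le_one₀ hq0.le hq1.le) hq0.le
    simp only [mul_one] at h1
    linarith
  have heq : ∀ n : ℕ, ((Real.log (1 - q * q ^ n) : ℝ) : ℂ)
      = Complex.log (1 - (q:ℂ) * (q:ℂ) ^ n) := by
    intro n
    rw [Complex.ofReal_log (hpos n).le]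
    congr 1
    push_cast
    ring
  have hcsum : Summable (fun n : ℕ => Complex.log (1 - (q:ℂ) * (q:ℂ) ^ n)) :=
    (key1 hq0 hq1 hcq).1
  have hrsum : Summable (fun n : ℕ => Real.log (1 - q * q ^ n)) := by
    rw [← Complex.summable_ofReal]
    exact hcsum.congr fun n => (heq n).symm
  have h := Real.rexp_tsum_eq_tprod (ι := ℕ)
    (f := fun n => 1 - q * q ^ n) (fun n => hpos n) hrsum
  have h2 : Real.exp (∑' n : ℕ, Real.log (1 - q * q ^ n)) = qPochR q := h
  rw [show Real.log (qPochR q) = ∑' n : ℕ, Real.log (1 - q * q ^ n) by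
    rw [← h2, Real.log_exp]]
  rw [Complex.ofReal_tsum]
  exact tsum_congr heq

set_option maxHeartbeats 2000000 in
/-- For `0 < q < 1` and `Re x > 0`,
`G_q(x) = exp( Σ_{p≥1} (1/p) [ (1/2)(1−x)(2−x) q^p + (1−x) q^p/(1 − q^p)
  − (q^{xp} − q^p)/(1 − q^p)² ] )`, the series converging absolutely. -/
theorem qBarnes_eq_exp_tsum (q : ℝ) (hq0 : 0 < q) (hq1 : q < 1) (x : ℂ) (hx : 0 < x.re) :
    Summable (fun p : ℕ =>
      ‖(1 / ((p : ℂ) + 1)) *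
        ((1 / 2) * (1 - x) * (2 - x) * (q : ℂ) ^ (p + 1) +
          (1 - x) * (q : ℂ) ^ (p + 1) / (1 - (q : ℂ) ^ (p + 1)) -
          (qpow q (x * ((p : ℂ) + 1)) - (q : ℂ) ^ (p + 1)) / (1 - (q : ℂ) ^ (p + 1)) ^ 2)‖) ∧
    qBarnes q x = Complex.exp (∑' p : ℕ,
      (1 / ((p : ℂ) + 1)) *
        ((1 / 2) * (1 - x) * (2 - x) * (q : ℂ) ^ (p + 1) +
          (1 - x) * (q : ℂ) ^ (p + 1) / (1 - (q : ℂ) ^ (p + 1)) -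
          (qpow q (x * ((p : ℂ) + 1)) - (q : ℂ) ^ (p + 1)) / (1 - (q : ℂ) ^ (p + 1)) ^ 2)) := by
  have hcq : ‖(q:ℂ)‖ < 1 := by
    rw [Complex.norm_real, Real.norm_eq_abs, abs_of_pos hq0]; exact hq1
  have hrn : ∀ k : ℕ, ‖(q:ℂ) ^ k‖ = q ^ k := fun k => by
    rw [norm_pow, Complex.norm_real, Real.norm_eq_abs, abs_of_pos hq0]
  set a : ℂ := qpow q x with hadef
  have ha : ‖a‖ < 1 := by
    rw [hadef, qpow, Complex.norm_exp]
    have hre : (x * (Real.log q : ℂ)).re = x.re * Real.log q := by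
      simp [Complex.mul_re]
    rw [hre]
    rw [Real.exp_lt_one_iff]
    exact mul_neg_of_pos_of_neg hx (Real.log_neg hq0 hq1)
  have hKa := key2 hq0 hq1 ha
  have hKr2 := key2 hq0 hq1 hcq
  have hKr1 := key1 hq0 hq1 hcq
  have hA := (hasSum_neg_log' hcq).mul_left ((1 - x) * (2 - x) / 2)
  have hB := hKr1.2.mul_left (x - 1)
  have htot := ((hA.add hB).add hKa.2).sub hKr2.2
  -- identify the summand with the statement's summand
  have hfun : (fun p : ℕ =>
      (1 / ((p : ℂ) + 1)) *
        ((1 / 2) * (1 - x) * (2 - x) * (q : ℂ) ^ (p + 1) +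
          (1 - x) * (q : ℂ) ^ (p + 1) / (1 - (q : ℂ) ^ (p + 1)) -
          (qpow q (x * ((p : ℂ) + 1)) - (q : ℂ) ^ (p + 1)) / (1 - (q : ℂ) ^ (p + 1)) ^ 2))
      = (fun p : ℕ =>
        ((1 - x) * (2 - x) / 2) * ((q:ℂ) ^ (p + 1) / ((p : ℂ) + 1))
          + (x - 1) * (-((q:ℂ) ^ (p + 1) / ((p : ℂ) + 1)) * (1 - (q : ℂ) ^ (p + 1))⁻¹)
          + -(a ^ (p + 1) / ((p : ℂ) + 1)) * ((1 - (q : ℂ) ^ (p + 1))⁻¹) ^ 2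
          - -((q:ℂ) ^ (p + 1) / ((p : ℂ) + 1)) * ((1 - (q : ℂ) ^ (p + 1))⁻¹) ^ 2) := by
    funext p
    have hp : ((p : ℂ) + 1) ≠ 0 := Nat.cast_add_one_ne_zero p
    have hqp1 : ‖(q:ℂ) ^ (p + 1)‖ < 1 := by
      rw [hrn]
      calc q ^ (p + 1) ≤ q ^ 1 :=
            pow_le_pow_of_le_one hq0.le hq1.le (Nat.succ_le_succ (Nat.zero_le p))
        _ = q := pow_one q
        _ < 1 := hq1
    have hne : (1 : ℂ) - (q:ℂ) ^ (p + 1) ≠ 0 := by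
      rw [sub_ne_zero]
      intro h
      rw [← h] at hqp1
      simp at hqp1
    have haq : qpow q (x * ((p : ℂ) + 1)) = a ^ (p + 1) := by
      rw [hadef, qpow, qpow]
      rw [show x * ((p:ℂ) + 1) * (Real.log q : ℂ)
          = ((p + 1 : ℕ) : ℂ) * (x * (Real.log q : ℂ)) by push_cast; ring]
      rw [Complex.exp_nat_mul]
    rw [haq]
    clear haq hqp1 hne hp
    generalize (q:ℂ) ^ (p + 1) = u
    generalize a ^ (p + 1) = A
    generalize ((p : ℂ) + 1) = P
    generalize (1 - u : ℂ) = s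
    ring
  constructor
  · refine summable_norm_iff.mpr ?_
    rw [hfun]
    exact htot.summable
  · have hE : (∑' p : ℕ,
        (1 / ((p : ℂ) + 1)) *
          ((1 / 2) * (1 - x) * (2 - x) * (q : ℂ) ^ (p + 1) +
            (1 - x) * (q : ℂ) ^ (p + 1) / (1 - (q : ℂ) ^ (p + 1)) -
            (qpow q (x * ((p : ℂ) + 1)) - (q : ℂ) ^ (p + 1)) / (1 - (q : ℂ) ^ (p + 1)) ^ 2))
        = ((1 - x) * (2 - x) / 2) * (-Complex.log (1 - (q:ℂ)))
          + (x - 1) * (∑' n : ℕ, Complex.log (1 - (q:ℂ) * (q:ℂ) ^ n))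
          + (∑' nm : ℕ × ℕ, Complex.log (1 - a * (q:ℂ) ^ (nm.1 + nm.2)))
          - (∑' nm : ℕ × ℕ, Complex.log (1 - (q:ℂ) * (q:ℂ) ^ (nm.1 + nm.2))) := by
      rw [hfun]
      exact htot.tsum_eq
    rw [hE]
    have hlog1q : ((Real.log (1 - q) : ℝ) : ℂ) = Complex.log (1 - (q:ℂ)) := by
      rw [Complex.ofReal_log (by linarith : (0:ℝ) ≤ 1 - q)]
      congr 1
      push_cast
      ring
    rw [qBarnes, hlog1q, log_qPochR hq0 hq1, ← hadef,
      qPoch2_eq_exp hq0 hq1 ha, qPoch2_eq_exp hq0 hq1 hcq,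
      ← Complex.exp_add, ← Complex.exp_add, ← Complex.exp_sub]
    congr 1
    ring
end

section
/- For every complex x with Re x > 0, the q-gamma function converges pointwise to the classical gamma function in the limit q → 1 from below: lim_{q→1⁻} Γ_q(x) = Γ(x). -/
open Complex Filter

namespace QGAux

noncomputable def E (q : ℝ) (w : ℂ) : ℂ := Complex.exp (w * (Real.log q : ℂ))

lemma norm_E {q : ℝ} (hq : 0 < q) (w : ℂ) : ‖E q w‖ = q ^ w.re := by
  rw [E, Complex.norm_exp, Real.rpow_def_of_pos hq]
  congr 1
  simp [Complex.mul_re]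
  ring

lemma norm_E_lt_one {q : ℝ} (hq : q ∈ Set.Ioo (0:ℝ) 1) {w : ℂ} (hw : 0 < w.re) :
    ‖E q w‖ < 1 := by
  rw [norm_E hq.1]
  exact Real.rpow_lt_one hq.1.le hq.2 hw

lemma one_sub_re_pos {z : ℂ} (hz : ‖z‖ < 1) : 0 < (1 - z).re := by
  have h1 : z.re ≤ ‖z‖ := Complex.re_le_norm z
  simp only [Complex.sub_re, Complex.one_re]
  linarith

lemma one_sub_mem_slitPlane {z : ℂ} (hz : ‖z‖ < 1) : (1 - z) ∈ Complex.slitPlane :=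
  Or.inl (one_sub_re_pos hz)

lemma one_sub_ne_zero {z : ℂ} (hz : ‖z‖ < 1) : (1 - z) ≠ 0 := by
  intro h
  have := one_sub_re_pos hz
  rw [h] at this
  simp at this

lemma E_add (q : ℝ) (a b : ℂ) : E q (a + b) = E q a * E q b := by
  rw [E, E, E, add_mul, Complex.exp_add]

lemma E_ofReal {q : ℝ} (hq : 0 < q) (r : ℝ) : E q (r : ℂ) = ((q ^ r : ℝ) : ℂ) := by
  rw [E, Real.rpow_def_of_pos hq, ← Complex.ofReal_mul, Complex.ofReal_exp, mul_comm]

lemma E_natCast {q : ℝ} (hq : 0 < q) (n : ℕ) : E q (n : ℂ) = ((q ^ n : ℝ) : ℂ) := by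
  rw [show ((n : ℂ)) = ((n : ℝ) : ℂ) by push_cast; ring, E_ofReal hq, Real.rpow_natCast]

noncomputable def phi (q : ℝ) (w : ℂ) : ℂ := Complex.log (1 - E q w)

noncomputable def phi' (q : ℝ) (w : ℂ) : ℂ :=
  -((Real.log q : ℂ) * E q w) / (1 - E q w)

noncomputable def phi'' (q : ℝ) (w : ℂ) : ℂ :=
  -((Real.log q : ℂ))^2 * E q w / (1 - E q w)^2

lemma hasDerivAt_E (q : ℝ) (c s : ℂ) :
    HasDerivAt (fun s => E q (c + s)) ((Real.log q : ℂ) * E q (c + s)) s := by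
  have h : HasDerivAt (fun s : ℂ => (c + s) * (Real.log q : ℂ)) (Real.log q : ℂ) s := by
    simpa using ((hasDerivAt_id s).const_add c).mul_const (Real.log q : ℂ)
  simpa [E, mul_comm] using h.cexp

lemma hasDerivAt_phi {q : ℝ} (hq : q ∈ Set.Ioo (0:ℝ) 1) {c s : ℂ} (h : 0 < (c + s).re) :
    HasDerivAt (fun s => phi q (c + s)) (phi' q (c + s)) s := by
  have hE : ‖E q (c + s)‖ < 1 := norm_E_lt_one hq h
  have h1 : HasDerivAt (fun s => 1 - E q (c + s)) (-((Real.log q : ℂ) * E q (c + s))) s :=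
    (hasDerivAt_E q c s).const_sub 1
  simpa [phi, phi'] using h1.clog (one_sub_mem_slitPlane hE)

lemma hasDerivAt_phi' {q : ℝ} (hq : q ∈ Set.Ioo (0:ℝ) 1) {c s : ℂ} (h : 0 < (c + s).re) :
    HasDerivAt (fun s => phi' q (c + s)) (phi'' q (c + s)) s := by
  have hE : ‖E q (c + s)‖ < 1 := norm_E_lt_one hq h
  have hne := one_sub_ne_zero hE
  have hf : HasDerivAt (fun s => -((Real.log q : ℂ) * E q (c + s)))
      (-((Real.log q : ℂ) * ((Real.log q : ℂ) * E q (c + s)))) s :=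
    (((hasDerivAt_E q c s).const_mul (Real.log q : ℂ))).neg
  have hg : HasDerivAt (fun s => 1 - E q (c + s)) (-((Real.log q : ℂ) * E q (c + s))) s :=
    (hasDerivAt_E q c s).const_sub 1
  have : HasDerivAt (fun s => -((Real.log q : ℂ) * E q (c + s)) / (1 - E q (c + s))) _ s :=
    hf.div hg hne
  refine this.congr_deriv ?_
  rw [phi'']
  field_simp
  ring

end QGAux
namespace QGAux

lemma self_le_sinh {u : ℝ} (hu : 0 ≤ u) : u ≤ Real.sinh u := by
  have mono : Monotone (fun u : ℝ => Real.sinh u - u) := by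
    apply monotone_of_deriv_nonneg
    · exact Real.differentiable_sinh.sub differentiable_id
    · intro u
      have hd : HasDerivAt (fun u : ℝ => Real.sinh u - u) (Real.cosh u - 1) u :=
        (Real.hasDerivAt_sinh u).sub (hasDerivAt_id u)
      rw [hd.deriv]
      linarith [Real.one_le_cosh u]
  have := mono hu
  simp only [Real.sinh_zero] at this
  linarith

/-- Key scalar inequality: `(log q)² qᵐ / (1-qᵐ)² ≤ 1/m²` for `q ∈ (0,1)`, `m > 0`. -/
lemma key_ineq {q : ℝ} (hq : q ∈ Set.Ioo (0:ℝ) 1) {m : ℝ} (hm : 0 < m) :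
    (Real.log q)^2 * q ^ m / (1 - q ^ m)^2 ≤ 1 / m^2 := by
  set y : ℝ := -(m * Real.log q) with hy
  have hLneg : Real.log q < 0 := Real.log_neg hq.1 hq.2
  have hypos : 0 < y := by rw [hy]; nlinarith
  have hqm : q ^ m = Real.exp (-y) := by
    rw [hy, neg_neg, Real.rpow_def_of_pos hq.1, mul_comm]
  have hqmlt : q ^ m < 1 := Real.rpow_lt_one hq.1.le hq.2 hm
  have hqmpos : 0 < q ^ m := Real.rpow_pos_of_pos hq.1 m
  -- key: y * exp(-y/2) ≤ 1 - exp(-y)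
  have key : y * Real.exp (-y/2) ≤ 1 - Real.exp (-y) := by
    have hs : y/2 ≤ Real.sinh (y/2) := self_le_sinh (by linarith)
    rw [Real.sinh_eq] at hs
    have h4 : 0 < Real.exp (-y/2) := Real.exp_pos _
    have h5 : Real.exp (y/2) * Real.exp (-y/2) = 1 := by
      rw [← Real.exp_add]; ring_nf; exact Real.exp_zero
    have h6 : Real.exp (-(y/2)) * Real.exp (-y/2) = Real.exp (-y) := by
      rw [← Real.exp_add]; ring_nf
    calc y * Real.exp (-y/2) ≤ (Real.exp (y/2) - Real.exp (-(y/2))) * Real.exp (-y/2) := by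
          apply mul_le_mul_of_nonneg_right (by linarith) h4.le
      _ = 1 - Real.exp (-y) := by rw [sub_mul, h5, h6]
  -- square it
  have sq1 : (y * Real.exp (-y/2))^2 ≤ (1 - q ^ m)^2 := by
    apply pow_le_pow_left₀ (by positivity) _ 2
    rw [hqm]; exact key
  have sq2 : (y * Real.exp (-y/2))^2 = y^2 * q ^ m := by
    rw [hqm, mul_pow, ← Real.exp_nat_mul, show ((2:ℕ):ℝ) * (-y/2) = -y by push_cast; ring]
  have hy2 : y^2 = m^2 * (Real.log q)^2 := by rw [hy]; ring
  rw [div_le_div_iff₀ (pow_pos (by linarith : (0:ℝ) < 1 - q ^ m) 2) (pow_pos hm 2)]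
  nlinarith [sq1, sq2, hy2, sq_nonneg (Real.log q), hqmpos]

lemma norm_phi''_le {q : ℝ} (hq : q ∈ Set.Ioo (0:ℝ) 1) {w : ℂ} (hw : 0 < w.re) :
    ‖phi'' q w‖ ≤ 1 / (w.re)^2 := by
  have hE : ‖E q w‖ = q ^ w.re := norm_E hq.1 w
  have hqm : q ^ w.re < 1 := Real.rpow_lt_one hq.1.le hq.2 hw
  have hqmpos : 0 < q ^ w.re := Real.rpow_pos_of_pos hq.1 _
  have hnorm1 : (1 : ℝ) - q ^ w.re ≤ ‖1 - E q w‖ := by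
    calc (1:ℝ) - q ^ w.re = ‖(1:ℂ)‖ - ‖E q w‖ := by rw [hE]; simp
      _ ≤ ‖1 - E q w‖ := norm_sub_norm_le _ _
  have hpos : (0:ℝ) < 1 - q ^ w.re := by linarith
  have heq : ‖phi'' q w‖ = (Real.log q)^2 * q ^ w.re / ‖1 - E q w‖^2 := by
    rw [phi'', norm_div, norm_mul, norm_pow, norm_neg, hE]
    norm_num [Complex.norm_real]
  rw [heq]
  calc (Real.log q)^2 * q ^ w.re / ‖1 - E q w‖^2
      ≤ (Real.log q)^2 * q ^ w.re / (1 - q ^ w.re)^2 := by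
        apply div_le_div_of_nonneg_left (by positivity) (by positivity)
        exact pow_le_pow_left₀ hpos.le hnorm1 2
    _ ≤ 1 / (w.re)^2 := key_ineq hq hw

end QGAux
namespace QGAux

/-- The summand whose tsum-exponential is `Γ_q(x)`. -/
noncomputable def h (x : ℂ) (q : ℝ) (n : ℕ) : ℂ :=
  phi q ((n : ℂ) + 1) - phi q ((n : ℂ) + x) + (x - 1) * (phi q ((n : ℂ) + 2) - phi q ((n : ℂ) + 1))

lemma norm_h_le (x : ℂ) (hx : 0 < x.re) {q : ℝ} (hq : q ∈ Set.Ioo (0:ℝ) 1) (n : ℕ) :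
    ‖h x q n‖ ≤ 2 * (max 1 ‖x - 1‖) * ‖x - 1‖ / ((n : ℝ) + min x.re 1)^2 := by
  set σ : ℝ := min x.re 1 with hσdef
  set M : ℝ := max 1 ‖x - 1‖ with hMdef
  have hσpos : 0 < σ := lt_min hx one_pos
  have hσle1 : σ ≤ 1 := min_le_right _ _
  have hM1 : (1:ℝ) ≤ M := le_max_left _ _
  have hMx : ‖x - 1‖ ≤ M := le_max_right _ _
  set U : Set ℂ := {s : ℂ | σ ≤ s.re} ∩ Metric.closedBall 1 M with hUdef
  have hUconv : Convex ℝ U := (convex_halfSpace_re_ge σ).inter (convex_closedBall 1 M)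
  have h1U : (1:ℂ) ∈ U := by
    constructor
    · simpa using hσle1
    · simp [Metric.mem_closedBall]; linarith
  have h2U : (2:ℂ) ∈ U := by
    constructor
    · show σ ≤ (2:ℂ).re
      have : (2:ℂ).re = 2 := by norm_num
      rw [this]; linarith
    · rw [Metric.mem_closedBall, dist_eq_norm]
      norm_num; linarith
  have hxU : x ∈ U := by
    constructor
    · show σ ≤ x.re
      exact min_le_left x.re 1
    · rw [Metric.mem_closedBall, dist_eq_norm]; exact hMx
  have hre : ∀ s ∈ U, 0 < ((n : ℂ) + s).re := by
    intro s hs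
    have h' : σ ≤ s.re := hs.1
    have h'' : (0:ℝ) ≤ n := Nat.cast_nonneg n
    simp only [Complex.add_re, Complex.natCast_re]
    linarith
  have hrege : ∀ s ∈ U, (n : ℝ) + σ ≤ ((n : ℂ) + s).re := by
    intro s hs
    have h' : σ ≤ s.re := hs.1
    simp only [Complex.add_re, Complex.natCast_re]
    linarith
  set C : ℝ := 1 / ((n : ℝ) + σ)^2 with hCdef
  have hnσ : 0 < (n : ℝ) + σ := by positivity
  have hCpos : 0 < C := by positivity
  have hbound'' : ∀ s ∈ U, ‖phi'' q ((n : ℂ) + s)‖ ≤ C := by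
    intro s hs
    refine (norm_phi''_le hq (hre s hs)).trans ?_
    rw [hCdef]
    apply one_div_le_one_div_of_le (by positivity)
    exact pow_le_pow_left₀ hnσ.le (hrege s hs) 2
  -- Lipschitz bound for phi'
  have step1 : ∀ a ∈ U, ∀ b ∈ U,
      ‖phi' q ((n : ℂ) + b) - phi' q ((n : ℂ) + a)‖ ≤ C * ‖b - a‖ := by
    intro a ha b hb
    exact hUconv.norm_image_sub_le_of_norm_hasDerivWithin_le
      (fun s hs => (hasDerivAt_phi' hq (hre s hs)).hasDerivWithinAt)
      (fun s hs => hbound'' s hs) ha hb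
  set P : ℂ := phi' q ((n : ℂ) + 1) with hPdef
  set g : ℂ → ℂ := fun s => phi q ((n : ℂ) + s) - s * P with hgdef
  have hg' : ∀ s ∈ U, HasDerivWithinAt g (phi' q ((n : ℂ) + s) - P) U s := by
    intro s hs
    exact ((hasDerivAt_phi hq (hre s hs)).sub ((hasDerivAt_id s).mul_const P)
      |>.congr_deriv (by ring)).hasDerivWithinAt
  have step2 : ∀ a ∈ U, ∀ b ∈ U, ‖g b - g a‖ ≤ (C * M) * ‖b - a‖ := by
    intro a ha b hb
    apply hUconv.norm_image_sub_le_of_norm_hasDerivWithin_le hg' _ ha hb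
    intro s hs
    calc ‖phi' q ((n : ℂ) + s) - P‖ ≤ C * ‖s - 1‖ := step1 1 h1U s hs
      _ ≤ C * M := by
          apply mul_le_mul_of_nonneg_left _ hCpos.le
          rw [← dist_eq_norm]
          exact Metric.mem_closedBall.mp hs.2
  have hiden : h x q n = (x - 1) * (g 2 - g 1) - (g x - g 1) := by
    simp only [hgdef, h]
    ring
  rw [hiden]
  have e1 : ‖g 2 - g 1‖ ≤ C * M * 1 := by
    have h21 : ‖(2:ℂ) - 1‖ = 1 := by norm_num
    have := step2 1 h1U 2 h2U
    rwa [h21] at this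
  have e2 : ‖g x - g 1‖ ≤ C * M * ‖x - 1‖ := step2 1 h1U x hxU
  calc ‖(x - 1) * (g 2 - g 1) - (g x - g 1)‖
      ≤ ‖(x - 1) * (g 2 - g 1)‖ + ‖g x - g 1‖ := norm_sub_le _ _
    _ = ‖x - 1‖ * ‖g 2 - g 1‖ + ‖g x - g 1‖ := by rw [norm_mul]
    _ ≤ ‖x - 1‖ * (C * M * 1) + C * M * ‖x - 1‖ := by
        have := mul_le_mul_of_nonneg_left e1 (norm_nonneg (x-1))
        linarith [e2]
    _ = 2 * M * ‖x - 1‖ / ((n : ℝ) + σ)^2 := by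
        rw [hCdef]; field_simp; ring

end QGAux
namespace QGAux

lemma summable_phi {q : ℝ} (hq : q ∈ Set.Ioo (0:ℝ) 1) {w : ℂ} (hw : 0 < w.re) :
    Summable (fun n : ℕ => phi q ((n : ℂ) + w)) := by
  obtain ⟨N₀, hN₀⟩ : ∃ N₀ : ℕ, q ^ N₀ < 1/2 := exists_pow_lt_of_lt_one (by norm_num) hq.2
  have hnormE : ∀ n : ℕ, ‖E q ((n : ℂ) + w)‖ ≤ q ^ n := by
    intro n
    rw [norm_E hq.1]
    have : ((n : ℂ) + w).re = (n : ℝ) + w.re := by simp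
    rw [this, Real.rpow_add hq.1, Real.rpow_natCast]
    have h1 : q ^ w.re ≤ 1 := Real.rpow_le_one hq.1.le hq.2.le hw.le
    have h2 : (0:ℝ) ≤ q ^ n := pow_nonneg hq.1.le n
    nlinarith
  apply Summable.of_norm_bounded_eventually (g := fun n : ℕ => 3/2 * q ^ n)
  · exact (summable_geometric_of_lt_one hq.1.le hq.2).mul_left _
  · rw [Nat.cofinite_eq_atTop, eventually_atTop]
    refine ⟨N₀, fun n hn => ?_⟩
    have hqn : q ^ n ≤ q ^ N₀ := pow_le_pow_of_le_one hq.1.le hq.2.le hn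
    have hE2 : ‖E q ((n : ℂ) + w)‖ ≤ 1/2 := le_trans (hnormE n) (by linarith)
    have : phi q ((n : ℂ) + w) = Complex.log (1 + -(E q ((n : ℂ) + w))) := by
      rw [phi, sub_eq_add_neg]
    rw [this]
    calc ‖Complex.log (1 + -(E q ((n : ℂ) + w)))‖
        ≤ 3/2 * ‖-(E q ((n : ℂ) + w))‖ :=
          Complex.norm_log_one_add_half_le_self (by rwa [norm_neg])
      _ ≤ 3/2 * q ^ n := by rw [norm_neg]; linarith [hnormE n]

lemma exp_tsum_phi {q : ℝ} (hq : q ∈ Set.Ioo (0:ℝ) 1) {w : ℂ} (hw : 0 < w.re) :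
    Complex.exp (∑' n : ℕ, phi q ((n : ℂ) + w)) = ∏' n : ℕ, (1 - E q ((n : ℂ) + w)) := by
  have hpos : ∀ n : ℕ, 0 < ((n : ℂ) + w).re := by
    intro n
    have : ((n : ℂ) + w).re = (n : ℝ) + w.re := by simp
    rw [this]
    have : (0:ℝ) ≤ n := Nat.cast_nonneg n
    linarith
  have := Complex.cexp_tsum_eq_tprod (f := fun n : ℕ => 1 - E q ((n : ℂ) + w))
    (fun n => one_sub_ne_zero (norm_E_lt_one hq (hpos n)))
    (summable_phi hq hw)
  exact this

lemma E_one {q : ℝ} (hq : 0 < q) : E q 1 = (q : ℂ) := by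
  rw [show (1:ℂ) = ((1:ℝ):ℂ) by norm_num, E_ofReal hq, Real.rpow_one]

lemma qPoch_q_eq {q : ℝ} (hq : q ∈ Set.Ioo (0:ℝ) 1) :
    qPoch (q : ℂ) q = ∏' n : ℕ, (1 - E q ((n : ℂ) + 1)) := by
  rw [qPoch]
  congr 1
  funext n
  rw [E_add, E_natCast hq.1, E_one hq.1]
  push_cast
  ring

lemma qPoch_qpow_eq (x : ℂ) {q : ℝ} (hq : q ∈ Set.Ioo (0:ℝ) 1) :
    qPoch (qpow q x) q = ∏' n : ℕ, (1 - E q ((n : ℂ) + x)) := by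
  rw [qPoch]
  congr 1
  funext n
  rw [E_add, E_natCast hq.1]
  rw [show E q x = qpow q x from rfl]
  push_cast
  ring

lemma phi_one {q : ℝ} (hq : q ∈ Set.Ioo (0:ℝ) 1) :
    phi q 1 = ((Real.log (1 - q) : ℝ) : ℂ) := by
  rw [phi, E_one hq.1, show (1 : ℂ) - (q:ℂ) = ((1 - q : ℝ) : ℂ) by push_cast; ring]
  rw [← Complex.ofReal_log (by linarith [hq.2])]

lemma qGamma_eq_exp_tsum (x : ℂ) (hx : 0 < x.re) {q : ℝ} (hq : q ∈ Set.Ioo (0:ℝ) 1) :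
    qGamma q x = Complex.exp (∑' n : ℕ, h x q n) := by
  have SA : Summable (fun n : ℕ => phi q ((n : ℂ) + 1)) := summable_phi hq (by norm_num)
  have SB : Summable (fun n : ℕ => phi q ((n : ℂ) + x)) := summable_phi hq hx
  have SC : Summable (fun n : ℕ => phi q ((n : ℂ) + 2)) := summable_phi hq (by norm_num)
  set A := ∑' n : ℕ, phi q ((n : ℂ) + 1) with hA
  set B := ∑' n : ℕ, phi q ((n : ℂ) + x) with hB
  set Cs := ∑' n : ℕ, phi q ((n : ℂ) + 2) with hCs
  have hshift : (fun n : ℕ => phi q ((n : ℂ) + 2)) = fun n : ℕ => phi q (((n + 1 : ℕ) : ℂ) + 1) := by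
    funext n; congr 1; push_cast; ring
  have hCsA : Cs = A - phi q 1 := by
    have h0 := Summable.tsum_eq_zero_add SA
    have : A = phi q (((0:ℕ) : ℂ) + 1) + Cs := by
      rw [hCs, hshift]; exact h0
    rw [this]
    simp only [Nat.cast_zero, zero_add]
    ring
  -- tsum of h
  have htsum : ∑' n : ℕ, h x q n = A - B + (x - 1) * (Cs - A) := by
    have hf : Summable (fun n : ℕ => phi q ((n : ℂ) + 1) - phi q ((n : ℂ) + x)) := SA.sub SB
    have hg : Summable (fun n : ℕ =>
        (x - 1) * (phi q ((n : ℂ) + 2) - phi q ((n : ℂ) + 1))) := (SC.sub SA).mul_left _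
    rw [show (fun n : ℕ => h x q n) = fun n : ℕ =>
        (phi q ((n : ℂ) + 1) - phi q ((n : ℂ) + x)) +
        (x - 1) * (phi q ((n : ℂ) + 2) - phi q ((n : ℂ) + 1)) from rfl]
    rw [Summable.tsum_add hf hg, Summable.tsum_sub SA SB, tsum_mul_left, Summable.tsum_sub SC SA]
  -- assemble
  have hphi1 : phi q 1 = ((Real.log (1 - q) : ℝ) : ℂ) := phi_one hq
  rw [qGamma, qPoch_q_eq hq, qPoch_qpow_eq x hq, ← exp_tsum_phi hq (show (0:ℝ) < (1:ℂ).re by norm_num),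
    ← exp_tsum_phi hq hx, htsum, hCsA, hphi1]
  rw [← Complex.exp_add, ← Complex.exp_sub]
  congr 1
  ring

end QGAux
namespace QGAux

/-- The slope quotient `(1 - q^w)/(1 - q)`. -/
noncomputable def A (w : ℂ) (q : ℝ) : ℂ := (1 - E q w) / (1 - (q : ℂ))

lemma tendsto_log_nhdsWithin :
    Tendsto (fun q : ℝ => Real.log q) (nhdsWithin 1 (Set.Ioo (0:ℝ) 1)) (nhdsWithin 0 {0}ᶜ) := by
  rw [tendsto_nhdsWithin_iff]
  constructor
  · have : ContinuousWithinAt Real.log (Set.Ioo (0:ℝ) 1) 1 :=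
      (Real.continuousAt_log one_ne_zero).continuousWithinAt
    simpa using this.tendsto
  · filter_upwards [eventually_mem_nhdsWithin] with q hq
    exact ne_of_lt (Real.log_neg hq.1 hq.2)

lemma tendsto_slope_quotient (c : ℂ) :
    Tendsto (fun u : ℝ => ((u : ℂ))⁻¹ * (Complex.exp (c * u) - 1)) (nhdsWithin 0 {0}ᶜ)
      (nhds c) := by
  have hin : HasDerivAt (fun u : ℝ => c * (u : ℂ)) c 0 := by
    simpa using (Complex.ofRealCLM.hasDerivAt (x := (0:ℝ))).const_mul c
  have hd : HasDerivAt (fun u : ℝ => Complex.exp (c * u)) c 0 := by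
    simpa using hin.cexp
  have := hasDerivAt_iff_tendsto_slope.mp hd
  apply this.congr
  intro u
  rw [slope_def_module]
  simp [real_smul, Complex.ofReal_inv]

lemma tendsto_A (w : ℂ) :
    Tendsto (fun q : ℝ => A w q) (nhdsWithin 1 (Set.Ioo (0:ℝ) 1)) (nhds w) := by
  have h1 := tendsto_slope_quotient w
  have h2 := tendsto_slope_quotient 1
  have hdiv := h1.div h2 one_ne_zero
  rw [div_one] at hdiv
  have hcomp := hdiv.comp tendsto_log_nhdsWithin
  apply hcomp.congr'
  filter_upwards [eventually_mem_nhdsWithin] with q hq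
  have hu : Real.log q ≠ 0 := ne_of_lt (Real.log_neg hq.1 hq.2)
  have huC : ((Real.log q : ℝ) : ℂ) ≠ 0 := Complex.ofReal_ne_zero.mpr hu
  have hq1 : Complex.exp (1 * (Real.log q : ℂ)) = (q : ℂ) := by
    rw [one_mul, ← Complex.ofReal_exp, Real.exp_log hq.1]
  show ((Real.log q : ℂ))⁻¹ * (Complex.exp (w * _) - 1) /
      (((Real.log q : ℂ))⁻¹ * (Complex.exp (1 * _) - 1)) = A w q
  rw [hq1, mul_div_mul_left _ _ (inv_ne_zero huC)]
  rw [A, E, ← neg_sub (1:ℂ) (Complex.exp _), ← neg_sub (1:ℂ) (q:ℂ), neg_div_neg_eq]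

/-- The limit of the summand as `q → 1⁻`. -/
noncomputable def H (x : ℂ) (n : ℕ) : ℂ :=
  -Complex.log (((n:ℂ) + x)/((n:ℂ) + 1)) + (x - 1) * Complex.log (((n:ℂ) + 2)/((n:ℂ) + 1))

lemma h_eq_on_Ioo (x : ℂ) (hx : 0 < x.re) {q : ℝ} (hq : q ∈ Set.Ioo (0:ℝ) 1) (n : ℕ) :
    h x q n = -Complex.log (A ((n:ℂ) + x) q / A ((n:ℂ) + 1) q) +
      (x - 1) * Complex.log (A ((n:ℂ) + 2) q / A ((n:ℂ) + 1) q) := by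
  have hq1C : (1 : ℂ) - (q : ℂ) ≠ 0 := by
    rw [show (1:ℂ) - (q:ℂ) = ((1 - q : ℝ) : ℂ) by push_cast; ring]
    exact Complex.ofReal_ne_zero.mpr (by linarith [hq.2])
  set p1 : ℝ := 1 - q ^ (n + 1) with hp1def
  set p2 : ℝ := 1 - q ^ (n + 2) with hp2def
  have hqn1 : q ^ (n+1) < 1 := pow_lt_one₀ hq.1.le hq.2 (by omega)
  have hqn2 : q ^ (n+2) < 1 := pow_lt_one₀ hq.1.le hq.2 (by omega)
  have hp1 : 0 < p1 := by rw [hp1def]; linarith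
  have hp2 : 0 < p2 := by rw [hp2def]; linarith
  have hE1 : E q ((n:ℂ) + 1) = ((q ^ (n+1) : ℝ) : ℂ) := by
    rw [show ((n:ℂ) + 1) = (((n+1 : ℕ)) : ℂ) by push_cast; ring, E_natCast hq.1]
  have hE2 : E q ((n:ℂ) + 2) = ((q ^ (n+2) : ℝ) : ℂ) := by
    rw [show ((n:ℂ) + 2) = (((n+2 : ℕ)) : ℂ) by push_cast; ring, E_natCast hq.1]
  have hone1 : (1:ℂ) - E q ((n:ℂ) + 1) = ((p1 : ℝ) : ℂ) := by rw [hE1, hp1def]; push_cast; ring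
  have hone2 : (1:ℂ) - E q ((n:ℂ) + 2) = ((p2 : ℝ) : ℂ) := by rw [hE2, hp2def]; push_cast; ring
  have hrex : 0 < ((n:ℂ) + x).re := by
    simp only [Complex.add_re, Complex.natCast_re]
    have : (0:ℝ) ≤ n := Nat.cast_nonneg n
    linarith
  set z : ℂ := 1 - E q ((n:ℂ) + x) with hzdef
  have hz : z ≠ 0 := one_sub_ne_zero (norm_E_lt_one hq hrex)
  set r : ℂ := z / ((p1 : ℝ) : ℂ) with hrdef
  have hr : r ≠ 0 := div_ne_zero hz (Complex.ofReal_ne_zero.mpr hp1.ne')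
  have hphix : phi q ((n:ℂ) + x) = ((Real.log p1 : ℝ) : ℂ) + Complex.log r := by
    rw [phi, ← hzdef, show z = ((p1 : ℝ) : ℂ) * r by
      rw [hrdef, mul_div_cancel₀ _ (Complex.ofReal_ne_zero.mpr hp1.ne')]]
    exact Complex.log_ofReal_mul hp1 hr
  have hphi1 : phi q ((n:ℂ) + 1) = ((Real.log p1 : ℝ) : ℂ) := by
    rw [phi, hone1, ← Complex.ofReal_log hp1.le]
  have hphi2 : phi q ((n:ℂ) + 2) = ((Real.log p2 : ℝ) : ℂ) := by
    rw [phi, hone2, ← Complex.ofReal_log hp2.le]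
  have hAr1 : A ((n:ℂ) + x) q / A ((n:ℂ) + 1) q = r := by
    rw [A, A, hone1, ← hzdef, hrdef]
    rw [div_div_div_cancel_right₀ hq1C]
  have hAr2 : A ((n:ℂ) + 2) q / A ((n:ℂ) + 1) q = ((p2 / p1 : ℝ) : ℂ) := by
    rw [A, A, hone1, hone2]
    rw [div_div_div_cancel_right₀ hq1C]
    push_cast; ring
  rw [h, hphix, hphi1, hphi2, hAr1, hAr2]
  rw [← Complex.ofReal_log (by positivity : (0:ℝ) ≤ p2 / p1), Real.log_div hp2.ne' hp1.ne']
  push_cast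
  ring

lemma re_ratio_pos (x : ℂ) (hx : 0 < x.re) (n : ℕ) :
    0 < (((n:ℂ) + x)/((n:ℂ) + 1)).re := by
  have hcast : ((n:ℂ) + 1) = (((n : ℝ) + 1 : ℝ) : ℂ) := by push_cast; ring
  rw [hcast, Complex.div_ofReal_re]
  apply div_pos
  · simp only [Complex.add_re, Complex.natCast_re]
    have : (0:ℝ) ≤ n := Nat.cast_nonneg n
    linarith
  · positivity

lemma tendsto_h (x : ℂ) (hx : 0 < x.re) (n : ℕ) :
    Tendsto (fun q : ℝ => h x q n) (nhdsWithin 1 (Set.Ioo (0:ℝ) 1)) (nhds (H x n)) := by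
  have hne1 : ((n:ℂ) + 1) ≠ 0 := by
    rw [show ((n:ℂ) + 1) = (((n+1 : ℕ)) : ℂ) by push_cast; ring]
    exact Nat.cast_ne_zero.mpr (Nat.succ_ne_zero n)
  have hr1 : Tendsto (fun q : ℝ => A ((n:ℂ) + x) q / A ((n:ℂ) + 1) q)
      (nhdsWithin 1 (Set.Ioo (0:ℝ) 1)) (nhds (((n:ℂ) + x)/((n:ℂ) + 1))) :=
    (tendsto_A _).div (tendsto_A _) hne1
  have hr2 : Tendsto (fun q : ℝ => A ((n:ℂ) + 2) q / A ((n:ℂ) + 1) q)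
      (nhdsWithin 1 (Set.Ioo (0:ℝ) 1)) (nhds (((n:ℂ) + 2)/((n:ℂ) + 1))) :=
    (tendsto_A _).div (tendsto_A _) hne1
  have hlog1 : Tendsto (fun q : ℝ => Complex.log (A ((n:ℂ) + x) q / A ((n:ℂ) + 1) q))
      (nhdsWithin 1 (Set.Ioo (0:ℝ) 1)) (nhds (Complex.log (((n:ℂ) + x)/((n:ℂ) + 1)))) :=
    (continuousAt_clog (Or.inl (re_ratio_pos x hx n))).tendsto.comp hr1
  have hlog2 : Tendsto (fun q : ℝ => Complex.log (A ((n:ℂ) + 2) q / A ((n:ℂ) + 1) q))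
      (nhdsWithin 1 (Set.Ioo (0:ℝ) 1)) (nhds (Complex.log (((n:ℂ) + 2)/((n:ℂ) + 1)))) :=
    (continuousAt_clog (Or.inl (re_ratio_pos 2 (by norm_num) n))).tendsto.comp hr2
  have := hlog1.neg.add (hlog2.const_mul (x - 1))
  rw [show H x n = -Complex.log (((n:ℂ) + x)/((n:ℂ) + 1)) +
      (x - 1) * Complex.log (((n:ℂ) + 2)/((n:ℂ) + 1)) from rfl]
  apply this.congr'
  filter_upwards [eventually_mem_nhdsWithin] with q hq
  exact (h_eq_on_Ioo x hx hq n).symm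

end QGAux
namespace QGAux

lemma summable_inv_sq_shift {σ : ℝ} (hσ : 0 < σ) :
    Summable (fun n : ℕ => 1 / ((n : ℝ) + σ)^2) := by
  apply Summable.of_norm_bounded_eventually (g := fun n : ℕ => 1 / (n : ℝ)^2)
  · exact Real.summable_one_div_nat_pow.mpr (by norm_num)
  · rw [Nat.cofinite_eq_atTop, eventually_atTop]
    refine ⟨1, fun n hn => ?_⟩
    have hn1 : (1:ℝ) ≤ n := by exact_mod_cast hn
    have hnn : ‖1 / ((n : ℝ) + σ)^2‖ = 1 / ((n : ℝ) + σ)^2 := Real.norm_of_nonneg (by positivity)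
    rw [hnn]
    apply div_le_div_of_nonneg_left one_pos.le (by positivity)
    nlinarith
  
lemma neBot_F : (nhdsWithin (1:ℝ) (Set.Ioo (0:ℝ) 1)).NeBot := by
  apply mem_closure_iff_nhdsWithin_neBot.mp
  rw [closure_Ioo (by norm_num : (0:ℝ) ≠ 1)]
  exact ⟨zero_le_one, le_refl 1⟩

lemma norm_H_le (x : ℂ) (hx : 0 < x.re) (n : ℕ) :
    ‖H x n‖ ≤ 2 * (max 1 ‖x - 1‖) * ‖x - 1‖ / ((n : ℝ) + min x.re 1)^2 := by
  have : (nhdsWithin (1:ℝ) (Set.Ioo (0:ℝ) 1)).NeBot := neBot_F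
  apply le_of_tendsto (tendsto_h x hx n).norm
  filter_upwards [eventually_mem_nhdsWithin] with q hq
  exact norm_h_le x hx hq n

lemma summable_H (x : ℂ) (hx : 0 < x.re) : Summable (H x) := by
  apply Summable.of_norm_bounded ((summable_inv_sq_shift (lt_min hx one_pos)).mul_left
    (2 * (max 1 ‖x - 1‖) * ‖x - 1‖))
  intro n
  calc ‖H x n‖ ≤ 2 * (max 1 ‖x - 1‖) * ‖x - 1‖ / ((n : ℝ) + min x.re 1)^2 := norm_H_le x hx n
    _ = 2 * (max 1 ‖x - 1‖) * ‖x - 1‖ * (1 / ((n : ℝ) + min x.re 1)^2) := by ring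

lemma natCast_add_ne {x : ℂ} (hx : 0 < x.re) (n : ℕ) : (n : ℂ) + x ≠ 0 := by
  intro hc
  have : ((n : ℂ) + x).re = 0 := by rw [hc]; simp
  simp only [Complex.add_re, Complex.natCast_re] at this
  have : (0:ℝ) ≤ n := Nat.cast_nonneg n
  nlinarith [Nat.cast_nonneg (α := ℝ) n]

lemma natCast_add_one_ne (n : ℕ) : (n : ℂ) + 1 ≠ 0 := by
  rw [show ((n:ℂ) + 1) = (((n+1 : ℕ)) : ℂ) by push_cast; ring]
  exact Nat.cast_ne_zero.mpr (Nat.succ_ne_zero n)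

lemma exp_H (x : ℂ) (hx : 0 < x.re) (n : ℕ) :
    Complex.exp (H x n) = (((n:ℂ) + 1)/((n:ℂ) + x)) *
      Complex.exp ((x - 1) * ((Real.log (((n:ℝ) + 2)/((n:ℝ) + 1)) : ℝ) : ℂ)) := by
  have hrne : ((n:ℂ) + x)/((n:ℂ) + 1) ≠ 0 :=
    div_ne_zero (natCast_add_ne hx n) (natCast_add_one_ne n)
  have hlog2 : Complex.log (((n:ℂ) + 2)/((n:ℂ) + 1)) =
      ((Real.log (((n:ℝ) + 2)/((n:ℝ) + 1)) : ℝ) : ℂ) := by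
    rw [show ((n:ℂ) + 2)/((n:ℂ) + 1) = (((((n:ℝ) + 2)/((n:ℝ) + 1)) : ℝ) : ℂ) by
      push_cast; ring]
    rw [← Complex.ofReal_log (by positivity)]
  rw [H, Complex.exp_add, hlog2, Complex.exp_neg, Complex.exp_log hrne, inv_div]

/-- Telescoping sum of logs. -/
lemma sum_log_telescope (N : ℕ) :
    ∑ n ∈ Finset.range N, Real.log (((n:ℝ) + 2)/((n:ℝ) + 1)) = Real.log ((N:ℝ) + 1) := by
  induction N with
  | zero => simp
  | succ N ih =>
    rw [Finset.sum_range_succ, ih, Real.log_div (by positivity) (by positivity)]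
    push_cast
    ring

noncomputable def Pfun (x : ℂ) (N : ℕ) : ℂ :=
  (Nat.factorial N : ℂ) / (∏ n ∈ Finset.range N, (x + (n:ℂ))) *
    Complex.exp ((x - 1) * ((Real.log ((N:ℝ) + 1) : ℝ) : ℂ))

lemma exp_sum_H (x : ℂ) (hx : 0 < x.re) (N : ℕ) :
    Complex.exp (∑ n ∈ Finset.range N, H x n) = Pfun x N := by
  rw [Complex.exp_sum]
  have : ∀ n ∈ Finset.range N, Complex.exp (H x n) = (((n:ℂ) + 1)/((n:ℂ) + x)) *
      Complex.exp ((x - 1) * ((Real.log (((n:ℝ) + 2)/((n:ℝ) + 1)) : ℝ) : ℂ)) :=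
    fun n _ => exp_H x hx n
  rw [Finset.prod_congr rfl this, Finset.prod_mul_distrib, ← Complex.exp_sum]
  have hsum : ∑ n ∈ Finset.range N, (x - 1) * ((Real.log (((n:ℝ) + 2)/((n:ℝ) + 1)) : ℝ) : ℂ)
      = (x - 1) * ((Real.log ((N:ℝ) + 1) : ℝ) : ℂ) := by
    rw [← Finset.mul_sum]
    congr 1
    rw [← Complex.ofReal_sum]
    exact_mod_cast congrArg (fun t : ℝ => (t : ℂ)) (sum_log_telescope N)
  rw [hsum, Pfun]
  congr 1
  rw [Finset.prod_div_distrib]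
  congr 1
  · rw [show (fun n : ℕ => ((n:ℂ) + 1)) = (fun n : ℕ => (((n + 1 : ℕ)) : ℂ)) by
      funext n; push_cast; ring]
    rw [← Nat.cast_prod]
    congr 1
    exact Finset.prod_range_add_one_eq_factorial N
  · exact Finset.prod_congr rfl fun n _ => by ring

end QGAux
namespace QGAux

noncomputable def cc (x : ℂ) (N : ℕ) : ℂ :=
  ((x + (N:ℂ))/((N:ℂ) + 1)) * Complex.exp (x * ((Real.log (((N:ℝ) + 1)/N) : ℝ) : ℂ))

lemma Pfun_eq (x : ℂ) (hx : 0 < x.re) {N : ℕ} (hN : 1 ≤ N) :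
    Pfun x N = Complex.GammaSeq x N * cc x N := by
  have hNR : (0:ℝ) < N := by exact_mod_cast hN
  have hNC : (N:ℂ) ≠ 0 := Nat.cast_ne_zero.mpr (by omega)
  have hN1C : (N:ℂ) + 1 ≠ 0 := natCast_add_one_ne N
  have hF : (∏ n ∈ Finset.range N, (x + (n:ℂ))) ≠ 0 :=
    Finset.prod_ne_zero_iff.mpr fun n _ => by
      rw [add_comm]; exact natCast_add_ne hx n
  have hxN : x + (N:ℂ) ≠ 0 := by rw [add_comm]; exact natCast_add_ne hx N
  have hcpow : (N:ℂ) ^ x = Complex.exp (x * ((Real.log N : ℝ) : ℂ)) := by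
    rw [Complex.cpow_def_of_ne_zero hNC, show Complex.log (N:ℂ) = ((Real.log N : ℝ) : ℂ) by
      rw [← Complex.ofReal_natCast, ← Complex.ofReal_log (Nat.cast_nonneg N)], mul_comm]
  have hlogdiv : Real.log (((N:ℝ) + 1)/N) = Real.log ((N:ℝ) + 1) - Real.log N :=
    Real.log_div (by positivity) hNR.ne'
  set a : ℂ := ((Real.log ((N:ℝ) + 1) : ℝ) : ℂ) with ha
  set b : ℂ := ((Real.log (N:ℝ) : ℝ) : ℂ) with hb
  have hexpa : Complex.exp a = (N:ℂ) + 1 := by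
    rw [ha, ← Complex.ofReal_exp, Real.exp_log (by positivity)]
    push_cast; ring
  have hprodsucc : (∏ j ∈ Finset.range (N+1), (x + (j:ℂ))) =
      (∏ n ∈ Finset.range N, (x + (n:ℂ))) * (x + (N:ℂ)) := Finset.prod_range_succ _ _
  rw [Pfun, Complex.GammaSeq, cc, hprodsucc, hcpow, hlogdiv]
  rw [show ((Real.log ((N:ℝ) + 1) - Real.log N : ℝ) : ℂ) = a - b by rw [ha, hb]; push_cast; ring]
  rw [mul_sub x a b, Complex.exp_sub, sub_mul x 1 a, one_mul, Complex.exp_sub, hexpa]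
  field_simp
  
lemma tendsto_cc (x : ℂ) : Tendsto (cc x) atTop (nhds 1) := by
  have hinv : Tendsto (fun N : ℕ => ((N:ℝ) + 1)⁻¹) atTop (nhds 0) :=
    (tendsto_atTop_add_const_right atTop 1 (tendsto_natCast_atTop_atTop (R := ℝ))).inv_tendsto_atTop
  have hinvC : Tendsto (fun N : ℕ => ((N:ℂ) + 1)⁻¹) atTop (nhds 0) := by
    have := (Complex.continuous_ofReal.tendsto 0).comp hinv
    rw [Complex.ofReal_zero] at this
    apply this.congr
    intro N
    simp only [Function.comp_apply, Complex.ofReal_inv, Complex.ofReal_add, Complex.ofReal_one,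
      Complex.ofReal_natCast]
  have h1 : Tendsto (fun N : ℕ => (x + (N:ℂ))/((N:ℂ) + 1)) atTop (nhds 1) := by
    have := (hinvC.const_mul (x - 1)).add_const 1
    rw [mul_zero, zero_add] at this
    apply this.congr
    intro N
    have hN1C : (N:ℂ) + 1 ≠ 0 := natCast_add_one_ne N
    field_simp
    ring
  have h2 : Tendsto (fun N : ℕ => ((N:ℝ) + 1)/N) atTop (nhds 1) := by
    have := (tendsto_one_div_atTop_nhds_zero_nat (𝕜 := ℝ)).const_add 1
    rw [add_zero] at this
    apply this.congr'
    filter_upwards [eventually_ge_atTop 1] with N hN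
    have hNR : (0:ℝ) < N := by exact_mod_cast hN
    field_simp
  have h3 : Tendsto (fun N : ℕ => Real.log (((N:ℝ) + 1)/N)) atTop (nhds 0) := by
    have := (Real.continuousAt_log one_ne_zero).tendsto.comp h2
    rwa [Real.log_one] at this
  have h4 : Tendsto (fun N : ℕ => Complex.exp (x * ((Real.log (((N:ℝ) + 1)/N) : ℝ) : ℂ)))
      atTop (nhds 1) := by
    have hC := (Complex.continuous_ofReal.tendsto 0).comp h3
    rw [Complex.ofReal_zero] at hC
    have := (hC.const_mul x)
    rw [mul_zero] at this
    have := (Complex.continuous_exp.tendsto 0).comp this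
    rwa [Complex.exp_zero] at this
  have := h1.mul h4
  rwa [mul_one] at this

lemma exp_tsum_H_eq_Gamma (x : ℂ) (hx : 0 < x.re) :
    Complex.exp (∑' n : ℕ, H x n) = Complex.Gamma x := by
  have hsum : Summable (H x) := summable_H x hx
  have T1 : Tendsto (fun N : ℕ => Complex.exp (∑ n ∈ Finset.range N, H x n)) atTop
      (nhds (Complex.exp (∑' n : ℕ, H x n))) :=
    (Complex.continuous_exp.tendsto _).comp hsum.hasSum.tendsto_sum_nat
  have T1' : Tendsto (Pfun x) atTop (nhds (Complex.exp (∑' n : ℕ, H x n))) :=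
    T1.congr fun N => exp_sum_H x hx N
  have T2 : Tendsto (Pfun x) atTop (nhds (Complex.Gamma x)) := by
    have := (Complex.GammaSeq_tendsto_Gamma x).mul (tendsto_cc x)
    rw [mul_one] at this
    apply this.congr'
    filter_upwards [eventually_ge_atTop 1] with N hN
    exact (Pfun_eq x hx hN).symm
  exact tendsto_nhds_unique T1' T2

end QGAux

open QGAux in
/-- For every complex `x` with `Re x > 0`, the q-gamma function converges pointwise to the
classical gamma function as `q → 1⁻` (through `q ∈ (0,1)`). -/
theorem qGamma_tendsto_Gamma (x : ℂ) (hx : 0 < x.re) :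
    Tendsto (fun q : ℝ => qGamma q x) (nhdsWithin 1 (Set.Ioo (0 : ℝ) 1))
      (nhds (Complex.Gamma x)) := by
  have hbd : Summable (fun n : ℕ =>
      2 * (max 1 ‖x - 1‖) * ‖x - 1‖ * (1 / ((n : ℝ) + min x.re 1)^2)) :=
    (summable_inv_sq_shift (lt_min hx one_pos)).mul_left _
  have htsum : Tendsto (fun q : ℝ => ∑' n : ℕ, h x q n)
      (nhdsWithin 1 (Set.Ioo (0 : ℝ) 1)) (nhds (∑' n : ℕ, H x n)) := by
    apply tendsto_tsum_of_dominated_convergence hbd (tendsto_h x hx)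
    filter_upwards [eventually_mem_nhdsWithin] with q hq
    intro n
    calc ‖h x q n‖ ≤ 2 * (max 1 ‖x - 1‖) * ‖x - 1‖ / ((n : ℝ) + min x.re 1)^2 :=
        norm_h_le x hx hq n
      _ = 2 * (max 1 ‖x - 1‖) * ‖x - 1‖ * (1 / ((n : ℝ) + min x.re 1)^2) := by ring
  have hexp : Tendsto (fun q : ℝ => Complex.exp (∑' n : ℕ, h x q n))
      (nhdsWithin 1 (Set.Ioo (0 : ℝ) 1)) (nhds (Complex.exp (∑' n : ℕ, H x n))) :=
    (Complex.continuous_exp.tendsto _).comp htsum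
  rw [← exp_tsum_H_eq_Gamma x hx]
  apply hexp.congr'
  filter_upwards [eventually_mem_nhdsWithin] with q hq
  exact (qGamma_eq_exp_tsum x hx hq).symm
end

section
/- For every real q with 0 < q < 1 and every complex x with |x| < 1, one has ∏_{m=0}^∞ (1 − x q^{4m+2})/(1 − x q^{4m}) = exp( Σ_{n=1}^∞ xⁿ / ( n (1 + q^{2n}) ) ), both the infinite product and the series converging absolutely. -/
open Complex

set_option maxHeartbeats 1000000

/-- For `0 < q < 1` and `|x| < 1`,
`∏_{m=0}^∞ (1 − x q^{4m+2})/(1 − x q^{4m}) = exp( Σ_{n≥1} xⁿ/(n(1 + q^{2n})) )`,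
with the product and the series converging absolutely. -/
theorem prod_eq_exp_tsum_resummation (q : ℝ) (hq0 : 0 < q) (hq1 : q < 1) (x : ℂ)
    (hx : ‖x‖ < 1) :
    Multipliable (fun m : ℕ =>
      (1 - x * (q : ℂ) ^ (4 * m + 2)) / (1 - x * (q : ℂ) ^ (4 * m))) ∧
    Summable (fun n : ℕ =>
      ‖x ^ (n + 1) / (((n : ℂ) + 1) * (1 + (q : ℂ) ^ (2 * (n + 1))))‖) ∧
    (∏' m : ℕ, (1 - x * (q : ℂ) ^ (4 * m + 2)) / (1 - x * (q : ℂ) ^ (4 * m))) =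
      Complex.exp (∑' n : ℕ, x ^ (n + 1) / (((n : ℂ) + 1) * (1 + (q : ℂ) ^ (2 * (n + 1))))) := by
  set Q : ℂ := (q : ℂ) with hQ
  have hQnorm : ‖Q‖ = q := by
    rw [hQ, Complex.norm_real, Real.norm_eq_abs, abs_of_pos hq0]
  have hQk : ∀ k : ℕ, ‖x * Q ^ k‖ < 1 := by
    intro k
    have h2 : q ^ k ≤ 1 := pow_le_one₀ hq0.le hq1.le
    calc ‖x * Q ^ k‖ = ‖x‖ * q ^ k := by rw [norm_mul, norm_pow, hQnorm]
      _ ≤ ‖x‖ * 1 := mul_le_mul_of_nonneg_left h2 (norm_nonneg _)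
      _ < 1 := by simpa using hx
  have hne : ∀ k : ℕ, (1 : ℂ) - x * Q ^ k ≠ 0 := by
    intro k h
    have h1 : x * Q ^ k = 1 := by linear_combination -h
    have h2 := hQk k
    rw [h1] at h2
    simp at h2
  -- the double family
  set g : ℕ → ℕ → ℂ := fun m n =>
    (x * Q ^ (4 * m)) ^ (n + 1) / (n + 1) - (x * Q ^ (4 * m + 2)) ^ (n + 1) / (n + 1) with hg
  -- shifted log series
  have hlog : ∀ w : ℂ, ‖w‖ < 1 →
      HasSum (fun n : ℕ => w ^ (n + 1) / (n + 1)) (-Complex.log (1 - w)) := by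
    intro w hw
    have h := Complex.hasSum_taylorSeries_neg_log hw
    have h0 := (hasSum_nat_add_iff' (f := fun n : ℕ => w ^ n / n) 1).2 h
    simpa using h0
  -- row sums
  set S : ℕ → ℂ := fun m =>
    -Complex.log (1 - x * Q ^ (4 * m)) - -Complex.log (1 - x * Q ^ (4 * m + 2)) with hS
  have hrow : ∀ m, HasSum (fun n => g m n) (S m) := fun m =>
    (hlog _ (hQk (4 * m))).sub (hlog _ (hQk (4 * m + 2)))
  -- exp of row sum is the factor
  have hexp : ∀ m, Complex.exp (S m) =
      (1 - x * Q ^ (4 * m + 2)) / (1 - x * Q ^ (4 * m)) := by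
    intro m
    rw [hS]
    simp only
    rw [sub_eq_add_neg, neg_neg, neg_add_eq_sub, Complex.exp_sub,
      Complex.exp_log (hne _), Complex.exp_log (hne _)]
  -- absolute summability of the double family
  have habs : Summable (fun p : ℕ × ℕ => g p.1 p.2) := by
    have hb : Summable (fun p : ℕ × ℕ => (q ^ 4) ^ p.1 * (2 * ‖x‖ ^ (p.2 + 1))) := by
      have hA : Summable (fun m : ℕ => (q ^ 4) ^ m) :=
        summable_geometric_of_lt_one (by positivity) (pow_lt_one₀ hq0.le hq1 (by norm_num))
      have hB : Summable (fun n : ℕ => 2 * ‖x‖ ^ (n + 1)) := by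
        have h := (summable_geometric_of_lt_one (norm_nonneg x) hx).mul_left (2 * ‖x‖)
        exact h.congr fun n => by rw [pow_succ']; ring
      exact Summable.mul_of_nonneg (f := fun m : ℕ => (q ^ 4) ^ m)
        (g := fun n : ℕ => 2 * ‖x‖ ^ (n + 1)) hA hB
        (Pi.le_def.mpr fun m => by positivity) (Pi.le_def.mpr fun n => by positivity)
    refine Summable.of_norm_bounded hb ?_
    rintro ⟨m, n⟩
    have hd : (1 : ℝ) ≤ ‖((n : ℂ) + 1)‖ := by
      have e1 : ((n : ℂ) + 1) = ((n + 1 : ℕ) : ℂ) := by push_cast; ring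
      rw [e1, Complex.norm_natCast]
      exact_mod_cast Nat.one_le_iff_ne_zero.2 (Nat.succ_ne_zero n)
    have key : ∀ k : ℕ, 4 * m ≤ k → ‖(x * Q ^ k) ^ (n + 1) / ((n : ℂ) + 1)‖ ≤
        (q ^ 4) ^ m * ‖x‖ ^ (n + 1) := by
      intro k hk
      have h1 : ‖(x * Q ^ k) ^ (n + 1)‖ ≤ (q ^ 4) ^ m * ‖x‖ ^ (n + 1) := by
        rw [norm_pow, norm_mul, norm_pow, hQnorm]
        have hqx : ‖x‖ * q ^ k ≤ ‖x‖ * q ^ (4 * m) :=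
          mul_le_mul_of_nonneg_left (pow_le_pow_of_le_one hq0.le hq1.le hk) (norm_nonneg _)
        calc (‖x‖ * q ^ k) ^ (n + 1) ≤ (‖x‖ * q ^ (4 * m)) ^ (n + 1) :=
              pow_le_pow_left₀ (by positivity) hqx _
          _ = ‖x‖ ^ (n + 1) * (q ^ (4 * m)) ^ (n + 1) := by ring
          _ ≤ ‖x‖ ^ (n + 1) * (q ^ (4 * m)) ^ 1 := by
              refine mul_le_mul_of_nonneg_left ?_ (by positivity)
              exact pow_le_pow_of_le_one (by positivity) (pow_le_one₀ hq0.le hq1.le)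
                (Nat.one_le_iff_ne_zero.2 (Nat.succ_ne_zero n))
          _ = (q ^ 4) ^ m * ‖x‖ ^ (n + 1) := by
              rw [pow_one, ← pow_mul]; ring
      calc ‖(x * Q ^ k) ^ (n + 1) / ((n : ℂ) + 1)‖
          = ‖(x * Q ^ k) ^ (n + 1)‖ / ‖((n : ℂ) + 1)‖ := norm_div _ _
        _ ≤ ‖(x * Q ^ k) ^ (n + 1)‖ := div_le_self (norm_nonneg _) hd
        _ ≤ (q ^ 4) ^ m * ‖x‖ ^ (n + 1) := h1
    calc ‖g m n‖ ≤ ‖(x * Q ^ (4 * m)) ^ (n + 1) / ((n : ℂ) + 1)‖ +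
          ‖(x * Q ^ (4 * m + 2)) ^ (n + 1) / ((n : ℂ) + 1)‖ := by
          rw [hg]; exact norm_sub_le _ _
      _ ≤ (q ^ 4) ^ m * ‖x‖ ^ (n + 1) + (q ^ 4) ^ m * ‖x‖ ^ (n + 1) :=
          add_le_add (key _ le_rfl) (key _ (by omega))
      _ = (q ^ 4) ^ m * (2 * ‖x‖ ^ (n + 1)) := by ring
  set T : ℂ := ∑' p : ℕ × ℕ, g p.1 p.2 with hT
  have hdouble : HasSum (fun p : ℕ × ℕ => g p.1 p.2) T := habs.hasSum
  have hSsum : HasSum S T := hdouble.prod_fiberwise hrow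
  -- column sums
  set c : ℕ → ℂ := fun n => x ^ (n + 1) / (((n : ℂ) + 1) * (1 + Q ^ (2 * (n + 1)))) with hc
  have hgeq : ∀ m n : ℕ, g m n =
      (x ^ (n + 1) * (1 - Q ^ (2 * (n + 1))) / ((n : ℂ) + 1)) * (Q ^ (4 * (n + 1))) ^ m := by
    intro m n
    have hne' : ((n : ℂ) + 1) ≠ 0 := Nat.cast_add_one_ne_zero n
    have e1 : (x * Q ^ (4 * m)) ^ (n + 1) = x ^ (n + 1) * (Q ^ (4 * (n + 1))) ^ m := by
      rw [mul_pow, ← pow_mul, ← pow_mul, show 4 * m * (n + 1) = 4 * (n + 1) * m by ring]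
    have e2 : (x * Q ^ (4 * m + 2)) ^ (n + 1) =
        x ^ (n + 1) * ((Q ^ (4 * (n + 1))) ^ m * Q ^ (2 * (n + 1))) := by
      rw [mul_pow, ← pow_mul, ← pow_mul, ← pow_add,
        show (4 * m + 2) * (n + 1) = 4 * (n + 1) * m + 2 * (n + 1) by ring]
    rw [hg]
    simp only
    rw [e1, e2]
    field_simp
  have hq2 : ∀ n : ℕ, q ^ (2 * (n + 1)) < 1 :=
    fun n => pow_lt_one₀ hq0.le hq1 (by omega)
  have h2 : ∀ n : ℕ, (1 : ℂ) - Q ^ (2 * (n + 1)) ≠ 0 := by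
    intro n
    refine sub_ne_zero.mpr fun h => ?_
    have h' := congrArg norm h
    rw [norm_one, norm_pow, hQnorm] at h'
    exact absurd h'.symm (ne_of_lt (hq2 n))
  have h3 : ∀ n : ℕ, (1 : ℂ) + Q ^ (2 * (n + 1)) ≠ 0 := by
    intro n h
    have hqe : Q ^ (2 * (n + 1)) = -1 := by linear_combination h
    have h' := congrArg norm hqe
    rw [norm_pow, hQnorm, norm_neg, norm_one] at h'
    exact absurd h' (ne_of_lt (hq2 n))
  have hr : ∀ n : ℕ, ‖Q ^ (4 * (n + 1))‖ < 1 := by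
    intro n; rw [norm_pow, hQnorm]; exact pow_lt_one₀ hq0.le hq1 (by omega)
  have hcol : ∀ n, HasSum (fun m => g m n) (c n) := by
    intro n
    have h := (hasSum_geometric_of_norm_lt_one (hr n)).mul_left
      (x ^ (n + 1) * (1 - Q ^ (2 * (n + 1))) / ((n : ℂ) + 1))
    have hne' : ((n : ℂ) + 1) ≠ 0 := Nat.cast_add_one_ne_zero n
    have h4 : (1 : ℂ) - Q ^ (4 * (n + 1)) =
        (1 - Q ^ (2 * (n + 1))) * (1 + Q ^ (2 * (n + 1))) := by
      rw [show 4 * (n + 1) = 2 * (n + 1) + 2 * (n + 1) by ring, pow_add]; ring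
    have heq : (x ^ (n + 1) * (1 - Q ^ (2 * (n + 1))) / ((n : ℂ) + 1)) *
        (1 - Q ^ (4 * (n + 1)))⁻¹ = c n := by
      have h2' := h2 n
      have h3' := h3 n
      rw [hc]
      simp only
      rw [h4]
      field_simp
    rw [heq] at h
    exact (funext fun m => hgeq m n : (fun m => g m n) = _) ▸ h
  have hswap : HasSum (fun p : ℕ × ℕ => g p.2 p.1) T :=
    ((Equiv.prodComm ℕ ℕ).hasSum_iff).2 hdouble
  have hcsum : HasSum c T := hswap.prod_fiberwise hcol
  -- summability of the norms of the column sums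
  have hnormsum : Summable (fun n : ℕ => ‖c n‖) := by
    have hb : Summable (fun n : ℕ => ‖x‖ ^ (n + 1)) := by
      have h := (summable_geometric_of_lt_one (norm_nonneg x) hx).mul_left ‖x‖
      exact h.congr fun n => by rw [pow_succ']
    refine Summable.of_nonneg_of_le (fun n => norm_nonneg _) (fun n => ?_) hb
    rw [hc]
    simp only
    rw [norm_div, norm_pow]
    have hd1 : (1 : ℝ) ≤ ‖((n : ℂ) + 1) * (1 + Q ^ (2 * (n + 1)))‖ := by
      rw [norm_mul]
      have e1 : ((n : ℂ) + 1) = ((n + 1 : ℕ) : ℂ) := by push_cast; ring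
      have e2 : (1 + Q ^ (2 * (n + 1))) = (((1 + q ^ (2 * (n + 1))) : ℝ) : ℂ) := by
        rw [hQ]; push_cast; ring
      rw [e1, e2, Complex.norm_natCast, Complex.norm_real, Real.norm_eq_abs,
        abs_of_pos (by positivity)]
      have hn1 : (1 : ℝ) ≤ ((n + 1 : ℕ) : ℝ) := by exact_mod_cast Nat.succ_le_succ (Nat.zero_le n)
      nlinarith [pow_pos hq0 (2 * (n + 1))]
    exact div_le_self (by positivity) hd1
  -- assemble
  have hP : HasProd (fun m : ℕ => (1 - x * Q ^ (4 * m + 2)) / (1 - x * Q ^ (4 * m)))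
      (Complex.exp T) := by
    have h := hSsum.cexp
    have hfun : (cexp ∘ S) =
        fun m => (1 - x * Q ^ (4 * m + 2)) / (1 - x * Q ^ (4 * m)) := funext hexp
    exact hfun ▸ h
  refine ⟨hP.multipliable, hnormsum, ?_⟩
  rw [hP.tprod_eq, hcsum.tsum_eq]
end

section
/- For every real q with 0 < q < 1 and every complex x with |x| < 1, one has ∏_{m=0}^∞ ∏_{l=0}^∞ (1 − x q^{4(m+l)+2})² / ( (1 − x q^{4(m+l)}) (1 − x q^{4(m+l)+4}) ) = exp( Σ_{n=1}^∞ xⁿ / ( n (1 + q^{2n})² ) ), both the double infinite product and the series converging absolutely. -/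
open Complex

private lemma aux_pow_norm_le (q : ℝ) (hq0 : 0 < q) (hq1 : q < 1) (x : ℂ) (hx : ‖x‖ < 1)
    (k j n : ℕ) : ‖(x * (q : ℂ) ^ (k + j)) ^ (n + 1)‖ ≤ q ^ k * ‖x‖ ^ n := by
  have hqk1 : q ^ k ≤ 1 := pow_le_one₀ hq0.le hq1.le
  rw [norm_pow, norm_mul, norm_pow, Complex.norm_real, Real.norm_eq_abs, abs_of_pos hq0]
  calc (‖x‖ * q ^ (k + j)) ^ (n + 1)
      ≤ (‖x‖ * q ^ k) ^ (n + 1) := by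
        refine pow_le_pow_left₀ (by positivity) ?_ _
        exact mul_le_mul_of_nonneg_left
          (pow_le_pow_of_le_one hq0.le hq1.le (Nat.le_add_right k j)) (norm_nonneg x)
    _ = (q ^ k) ^ (n + 1) * ‖x‖ ^ (n + 1) := by rw [mul_pow]; ring
    _ ≤ q ^ k * ‖x‖ ^ n := by
        apply mul_le_mul
        · calc (q ^ k) ^ (n + 1) ≤ (q ^ k) ^ 1 :=
                pow_le_pow_of_le_one (by positivity) hqk1 (by omega)
            _ = q ^ k := pow_one _
        · exact pow_le_pow_of_le_one (norm_nonneg x) hx.le (by omega)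
        · positivity
        · positivity

set_option maxHeartbeats 2000000 in
/-- For `0 < q < 1` and `|x| < 1`,
`∏_{m,l=0}^∞ (1 − x q^{4(m+l)+2})² / ((1 − x q^{4(m+l)})(1 − x q^{4(m+l)+4}))
  = exp( Σ_{n≥1} xⁿ/(n(1 + q^{2n})²) )`,
with the double product and the series converging absolutely. -/
theorem double_prod_eq_exp_tsum_resummation (q : ℝ) (hq0 : 0 < q) (hq1 : q < 1) (x : ℂ)
    (hx : ‖x‖ < 1) :
    Multipliable (fun p : ℕ × ℕ =>
      (1 - x * (q : ℂ) ^ (4 * (p.1 + p.2) + 2)) ^ 2 /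
        ((1 - x * (q : ℂ) ^ (4 * (p.1 + p.2))) * (1 - x * (q : ℂ) ^ (4 * (p.1 + p.2) + 4)))) ∧
    Summable (fun n : ℕ =>
      ‖x ^ (n + 1) / (((n : ℂ) + 1) * (1 + (q : ℂ) ^ (2 * (n + 1))) ^ 2)‖) ∧
    (∏' p : ℕ × ℕ,
      (1 - x * (q : ℂ) ^ (4 * (p.1 + p.2) + 2)) ^ 2 /
        ((1 - x * (q : ℂ) ^ (4 * (p.1 + p.2))) * (1 - x * (q : ℂ) ^ (4 * (p.1 + p.2) + 4)))) =
      Complex.exp (∑' n : ℕ,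
        x ^ (n + 1) / (((n : ℂ) + 1) * (1 + (q : ℂ) ^ (2 * (n + 1))) ^ 2)) := by
  have hx0 : (0:ℝ) ≤ ‖x‖ := norm_nonneg x
  -- basic facts
  have hw : ∀ k : ℕ, ‖x * (q : ℂ) ^ k‖ < 1 := by
    intro k
    rw [norm_mul, norm_pow, Complex.norm_real, Real.norm_eq_abs, abs_of_pos hq0]
    calc ‖x‖ * q ^ k ≤ ‖x‖ * 1 := by
          gcongr
          exact pow_le_one₀ hq0.le hq1.le
      _ = ‖x‖ := mul_one _
      _ < 1 := hx
  have hne : ∀ k : ℕ, 1 - x * (q : ℂ) ^ k ≠ 0 := by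
    intro k h
    have h1 : (1 : ℂ) = x * (q : ℂ) ^ k := sub_eq_zero.mp h
    have := hw k
    rw [← h1, norm_one] at this
    exact lt_irrefl 1 this
  -- the summand function
  set F : (ℕ × ℕ) × ℕ → ℂ := fun pn =>
    ((x * (q:ℂ) ^ (4 * (pn.1.1 + pn.1.2))) ^ pn.2
      + (x * (q:ℂ) ^ (4 * (pn.1.1 + pn.1.2) + 4)) ^ pn.2
      - 2 * (x * (q:ℂ) ^ (4 * (pn.1.1 + pn.1.2) + 2)) ^ pn.2) / pn.2 with hFdef
  have hF0 : ∀ p : ℕ × ℕ, F (p, 0) = 0 := by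
    intro p; simp [hFdef]
  -- termwise norm bound for shifted index
  have hFb : ∀ (p : ℕ × ℕ) (n : ℕ),
      ‖F (p, n + 1)‖ ≤ 4 * ((q ^ 4) ^ p.1 * (q ^ 4) ^ p.2) * ‖x‖ ^ n := by
    intro p n
    have hb1 := aux_pow_norm_le q hq0 hq1 x hx (4 * (p.1 + p.2)) 0 n
    have hb2 := aux_pow_norm_le q hq0 hq1 x hx (4 * (p.1 + p.2)) 2 n
    have hb3 := aux_pow_norm_le q hq0 hq1 x hx (4 * (p.1 + p.2)) 4 n
    rw [Nat.add_zero] at hb1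
    have hden : (1:ℝ) ≤ ‖((n + 1 : ℕ) : ℂ)‖ := by
      rw [Complex.norm_natCast]
      push_cast
      linarith [Nat.cast_nonneg (α := ℝ) n]
    have hnum : ‖(x * (q:ℂ) ^ (4 * (p.1 + p.2))) ^ (n+1)
        + (x * (q:ℂ) ^ (4 * (p.1 + p.2) + 4)) ^ (n+1)
        - 2 * (x * (q:ℂ) ^ (4 * (p.1 + p.2) + 2)) ^ (n+1)‖
        ≤ 4 * (q ^ (4 * (p.1 + p.2)) * ‖x‖ ^ n) := by
      calc _ ≤ ‖(x * (q:ℂ) ^ (4 * (p.1 + p.2))) ^ (n+1)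
            + (x * (q:ℂ) ^ (4 * (p.1 + p.2) + 4)) ^ (n+1)‖
            + ‖2 * (x * (q:ℂ) ^ (4 * (p.1 + p.2) + 2)) ^ (n+1)‖ := norm_sub_le _ _
        _ ≤ (‖(x * (q:ℂ) ^ (4 * (p.1 + p.2))) ^ (n+1)‖
            + ‖(x * (q:ℂ) ^ (4 * (p.1 + p.2) + 4)) ^ (n+1)‖)
            + 2 * ‖(x * (q:ℂ) ^ (4 * (p.1 + p.2) + 2)) ^ (n+1)‖ := by
              refine add_le_add (norm_add_le _ _) ?_
              rw [norm_mul]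
              norm_num
        _ ≤ (q ^ (4 * (p.1 + p.2)) * ‖x‖ ^ n + q ^ (4 * (p.1 + p.2)) * ‖x‖ ^ n)
            + 2 * (q ^ (4 * (p.1 + p.2)) * ‖x‖ ^ n) := by gcongr
        _ = 4 * (q ^ (4 * (p.1 + p.2)) * ‖x‖ ^ n) := by ring
    have hqs : q ^ (4 * (p.1 + p.2)) = (q ^ 4) ^ p.1 * (q ^ 4) ^ p.2 := by
      ring
    calc ‖F (p, n + 1)‖ = ‖(x * (q:ℂ) ^ (4 * (p.1 + p.2))) ^ (n+1)
            + (x * (q:ℂ) ^ (4 * (p.1 + p.2) + 4)) ^ (n+1)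
            - 2 * (x * (q:ℂ) ^ (4 * (p.1 + p.2) + 2)) ^ (n+1)‖ / ‖((n + 1 : ℕ) : ℂ)‖ := by
          simp only [hFdef]
          rw [norm_div]
      _ ≤ ‖(x * (q:ℂ) ^ (4 * (p.1 + p.2))) ^ (n+1)
            + (x * (q:ℂ) ^ (4 * (p.1 + p.2) + 4)) ^ (n+1)
            - 2 * (x * (q:ℂ) ^ (4 * (p.1 + p.2) + 2)) ^ (n+1)‖ :=
          div_le_self (norm_nonneg _) hden
      _ ≤ 4 * (q ^ (4 * (p.1 + p.2)) * ‖x‖ ^ n) := hnum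
      _ = 4 * ((q ^ 4) ^ p.1 * (q ^ 4) ^ p.2) * ‖x‖ ^ n := by rw [hqs]; ring
  have hgx : Summable (fun n : ℕ => ‖x‖ ^ n) := summable_geometric_of_lt_one hx0 hx
  have hq4 : q ^ 4 < 1 := pow_lt_one₀ hq0.le hq1 (by norm_num)
  have hq4' : (0:ℝ) ≤ q ^ 4 := by positivity
  -- inner summability in n, for each p
  have hFinner : ∀ p : ℕ × ℕ, Summable (fun n => ‖F (p, n)‖) := by
    intro p
    rw [← summable_nat_add_iff 1]
    exact Summable.of_nonneg_of_le (fun n => norm_nonneg _) (fun n => hFb p n)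
      ((hgx.mul_left _))
  -- bound on inner tsums
  have hFtsum : ∀ p : ℕ × ℕ, ∑' n, ‖F (p, n)‖
      ≤ 4 * (1 - ‖x‖)⁻¹ * ((q ^ 4) ^ p.1 * (q ^ 4) ^ p.2) := by
    intro p
    rw [Summable.tsum_eq_zero_add (hFinner p), hF0 p, norm_zero, zero_add]
    calc ∑' n, ‖F (p, n + 1)‖
        ≤ ∑' n, 4 * ((q ^ 4) ^ p.1 * (q ^ 4) ^ p.2) * ‖x‖ ^ n := by
          refine Summable.tsum_le_tsum (fun n => hFb p n) ?_ (hgx.mul_left _)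
          exact (summable_nat_add_iff 1).mpr (hFinner p)
      _ = 4 * ((q ^ 4) ^ p.1 * (q ^ 4) ^ p.2) * (1 - ‖x‖)⁻¹ := by
          rw [tsum_mul_left, tsum_geometric_of_lt_one hx0 hx]
      _ = 4 * (1 - ‖x‖)⁻¹ * ((q ^ 4) ^ p.1 * (q ^ 4) ^ p.2) := by ring
  -- joint absolute summability
  have hFnorm : Summable (fun pn : (ℕ × ℕ) × ℕ => ‖F pn‖) := by
    refine (summable_prod_of_nonneg (fun _ => norm_nonneg _)).2 ⟨fun p => hFinner p, ?_⟩
    refine Summable.of_nonneg_of_le (fun p => tsum_nonneg fun n => norm_nonneg _)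
      (fun p => hFtsum p) ?_
    exact ((summable_geometric_of_lt_one hq4' hq4).mul_of_nonneg
      (summable_geometric_of_lt_one hq4' hq4) (fun m => by positivity)
      (fun l => by positivity)).mul_left _
  have hFsummable : Summable F := hFnorm.of_norm
  set T : ℂ := ∑' pn, F pn with hTdef
  have hT : HasSum F T := hFsummable.hasSum
  -- log terms
  set L : ℕ × ℕ → ℂ := fun p =>
    2 * Complex.log (1 - x * (q:ℂ) ^ (4 * (p.1 + p.2) + 2))
      - Complex.log (1 - x * (q:ℂ) ^ (4 * (p.1 + p.2)))
      - Complex.log (1 - x * (q:ℂ) ^ (4 * (p.1 + p.2) + 4)) with hLdef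
  have hLsum : ∀ p : ℕ × ℕ, HasSum (fun n => F (p, n)) (L p) := by
    intro p
    have h1 := Complex.hasSum_taylorSeries_neg_log (hw (4 * (p.1 + p.2)))
    have h2 := Complex.hasSum_taylorSeries_neg_log (hw (4 * (p.1 + p.2) + 2))
    have h3 := Complex.hasSum_taylorSeries_neg_log (hw (4 * (p.1 + p.2) + 4))
    have h := (h1.add h3).sub (h2.mul_left 2)
    have heq : (fun n => F (p, n)) = fun n : ℕ =>
        (x * (q:ℂ) ^ (4 * (p.1 + p.2))) ^ n / n
          + (x * (q:ℂ) ^ (4 * (p.1 + p.2) + 4)) ^ n / n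
          - 2 * ((x * (q:ℂ) ^ (4 * (p.1 + p.2) + 2)) ^ n / n) := by
      funext n
      simp only [hFdef]
      ring
    rw [heq]
    convert h using 1
    · rfl
    simp only [hLdef]
    ring
  have hL : HasSum L T := hT.prod_fiberwise hLsum
  -- the fiberwise sums in the other order
  set G : ℕ → ℂ := fun n => x ^ n / (n * (1 + (q:ℂ) ^ (2 * n)) ^ 2) with hGdef
  have hG0 : G 0 = 0 := by simp [hGdef]
  have hGsum : ∀ n : ℕ, HasSum (fun p : ℕ × ℕ => F (p, n)) (G n) := by
    intro n
    rcases Nat.eq_zero_or_pos n with rfl | hn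
    · have h0 : (fun p : ℕ × ℕ => F (p, 0)) = fun _ => (0:ℂ) := funext fun p => hF0 p
      rw [h0, hG0]
      exact hasSum_zero
    · set y : ℂ := (q:ℂ) ^ (4 * n) with hydef
      have hy : ‖y‖ < 1 := by
        rw [hydef, norm_pow, Complex.norm_real, Real.norm_eq_abs, abs_of_pos hq0]
        exact pow_lt_one₀ hq0.le hq1 (by omega)
      have hgeo := hasSum_geometric_of_norm_lt_one hy
      have hsn : Summable fun k : ℕ => ‖y ^ k‖ := by
        simpa only [norm_pow] using summable_geometric_of_lt_one (norm_nonneg y) hy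
      have hmul : HasSum (fun p : ℕ × ℕ => y ^ p.1 * y ^ p.2) ((1 - y)⁻¹ * (1 - y)⁻¹) := by
        have hs := (summable_mul_of_summable_norm hsn hsn).hasSum
        rwa [← tsum_mul_tsum_of_summable_norm hsn hsn, hgeo.tsum_eq] at hs
      have hc := hmul.mul_left (x ^ n * (1 - (q:ℂ) ^ (2 * n)) ^ 2 / n)
      have heq : (fun p : ℕ × ℕ => F (p, n)) = fun p : ℕ × ℕ =>
          x ^ n * (1 - (q:ℂ) ^ (2 * n)) ^ 2 / n * (y ^ p.1 * y ^ p.2) := by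
        funext p
        simp only [hFdef, hydef]
        rw [div_mul_eq_mul_div, div_eq_div_iff (by norm_cast; omega) (by norm_cast; omega)]
        ring
      rw [heq]
      convert hc using 1
      · rfl
        -- value computation
      have hQ2 : ((q:ℂ) ^ (2 * n)) = ((q ^ (2 * n) : ℝ) : ℂ) := by push_cast; ring
      have hq2n1 : q ^ (2 * n) < 1 := pow_lt_one₀ hq0.le hq1 (by omega)
      have h2ne : (1 : ℂ) - (q:ℂ) ^ (2 * n) ≠ 0 := by
        rw [hQ2, sub_ne_zero]
        intro h
        have : (1:ℝ) = q ^ (2 * n) := by exact_mod_cast h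
        linarith
      have h2pe : (1 : ℂ) + (q:ℂ) ^ (2 * n) ≠ 0 := by
        rw [hQ2, show (1:ℂ) + ((q ^ (2*n) : ℝ) : ℂ) = ((1 + q ^ (2*n) : ℝ) : ℂ) by push_cast; ring]
        rw [Complex.ofReal_ne_zero]
        positivity
      have hyfact : 1 - y = (1 - (q:ℂ) ^ (2 * n)) * (1 + (q:ℂ) ^ (2 * n)) := by
        rw [hydef, show (4 * n) = (2 * n) + (2 * n) by ring, pow_add]
        ring
      have hyne : (1 : ℂ) - y ≠ 0 := by
        rw [hyfact]
        exact mul_ne_zero h2ne h2pe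
      have hnne : (n : ℂ) ≠ 0 := Nat.cast_ne_zero.mpr hn.ne'
      rw [hGdef]
      simp only
      rw [hyfact]
      field_simp
  have hswap : HasSum (F ∘ (Equiv.prodComm ℕ (ℕ × ℕ))) T :=
    (Equiv.prodComm ℕ (ℕ × ℕ)).hasSum_iff.mpr hT
  have hG : HasSum G T := hswap.prod_fiberwise fun n => hGsum n
  -- exponentiate
  have hexp : HasProd (fun p : ℕ × ℕ => Complex.exp (L p)) (Complex.exp T) := hL.cexp
  have hLa : (fun p : ℕ × ℕ => Complex.exp (L p)) = fun p : ℕ × ℕ =>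
      (1 - x * (q : ℂ) ^ (4 * (p.1 + p.2) + 2)) ^ 2 /
        ((1 - x * (q : ℂ) ^ (4 * (p.1 + p.2))) * (1 - x * (q : ℂ) ^ (4 * (p.1 + p.2) + 4))) := by
    funext p
    simp only [hLdef]
    rw [sub_sub, Complex.exp_sub, two_mul, Complex.exp_add, Complex.exp_add,
      Complex.exp_log (hne _), Complex.exp_log (hne _), Complex.exp_log (hne _)]
    ring
  rw [hLa] at hexp
  -- identify T with the stated series
  have hTeq : T = ∑' n : ℕ,
      x ^ (n + 1) / (((n : ℂ) + 1) * (1 + (q : ℂ) ^ (2 * (n + 1))) ^ 2) := by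
    rw [← hG.tsum_eq, Summable.tsum_eq_zero_add hG.summable, hG0, zero_add]
    congr 1
    funext n
    simp only [hGdef]
    push_cast
    ring_nf
  refine ⟨hexp.multipliable, ?_, ?_⟩
  · refine Summable.of_nonneg_of_le (fun n => norm_nonneg _) (fun n => ?_) hgx
    have hd : (1:ℝ) ≤ ‖((n : ℂ) + 1) * (1 + (q : ℂ) ^ (2 * (n + 1))) ^ 2‖ := by
      rw [show ((n : ℂ) + 1) * (1 + (q : ℂ) ^ (2 * (n + 1))) ^ 2
          = ((((n:ℝ) + 1) * (1 + q ^ (2 * (n + 1))) ^ 2 : ℝ) : ℂ) by push_cast; ring,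
        Complex.norm_real, Real.norm_eq_abs, abs_of_pos (by positivity)]
      have h1 : (1:ℝ) ≤ (n:ℝ) + 1 := by linarith [Nat.cast_nonneg (α := ℝ) n]
      have h2 : (1:ℝ) ≤ (1 + q ^ (2 * (n + 1))) ^ 2 := by nlinarith [pow_pos hq0 (2 * (n + 1))]
      nlinarith
    calc ‖x ^ (n + 1) / (((n : ℂ) + 1) * (1 + (q : ℂ) ^ (2 * (n + 1))) ^ 2)‖
        = ‖x‖ ^ (n + 1) / ‖((n : ℂ) + 1) * (1 + (q : ℂ) ^ (2 * (n + 1))) ^ 2‖ := by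
          rw [norm_div, norm_pow]
      _ ≤ ‖x‖ ^ (n + 1) := div_le_self (by positivity) hd
      _ ≤ ‖x‖ ^ n := pow_le_pow_of_le_one hx0 hx.le (by omega)
  · rw [hexp.tprod_eq, hTeq]
end
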